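/- arXiv:0709.2882 — 5 statements merged into one kernel-verified Lean document; each statement's English description precedes it below -/
import Mathlib

section
/- Let α ∈ [0,1) be irrational with convergent denominators q_k. There is an absolute constant c > 0 such that for all M and k with q_k ≤ M < q_{k+1}, the sum S_M(α) = Σ_{m=1}^M 1/‖mα‖ satisfies S_M(α) ≥ c · M · log q_k. -/
open Filter MeasureTheory Real

/-- Distance from `x` to the nearest integer. -/
noncomputable def nd (x : ℝ) : ℝ := |x - round x|

/-- The Gauss map `x ↦ frac (1/x)` (with `0 ↦ 0`). -/
noncomputable def gaussMap (x : ℝ) : ℝ := Int.fract x⁻¹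

/-- The `k`-th partial quotient of the continued fraction of `α` (for `k ≥ 1`). -/
noncomputable def cfA (α : ℝ) (k : ℕ) : ℕ := ⌊(gaussMap^[k-1] α)⁻¹⌋₊

/-- Denominators of the continued fraction convergents of `α`. -/
noncomputable def cfQ (α : ℝ) : ℕ → ℕ
  | 0 => 1
  | 1 => cfA α 1
  | (k+2) => cfA α (k+2) * cfQ α (k+1) + cfQ α k

/-- Numerators of the continued fraction convergents of `α`. -/
noncomputable def cfP (α : ℝ) : ℕ → ℕ
  | 0 => 0
  | 1 => 1
  | (k+2) => cfA α (k+2) * cfP α (k+1) + cfP α k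

/-- `S α M = ∑_{m=1}^M 1/‖mα‖`. -/
noncomputable def S (α : ℝ) (M : ℕ) : ℝ := ∑ m ∈ Finset.Icc 1 M, 1 / nd (m * α)

namespace SLB

/-- iterated Gauss map -/
noncomputable def GA (α : ℝ) (k : ℕ) : ℝ := gaussMap^[k] α

/-- product of the first `k+1` iterates -/
noncomputable def B (α : ℝ) (k : ℕ) : ℝ := ∏ j ∈ Finset.range (k+1), GA α j

variable {α : ℝ}

lemma GA_zero : GA α 0 = α := rfl

lemma GA_succ (k : ℕ) : GA α (k+1) = Int.fract (GA α k)⁻¹ := by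
  rw [GA, Function.iterate_succ_apply']; rfl

lemma GA_mem (hir : Irrational α) (h0 : 0 < α) (h1 : α < 1) (k : ℕ) :
    Irrational (GA α k) ∧ 0 < GA α k ∧ GA α k < 1 := by
  induction k with
  | zero => exact ⟨hir, h0, h1⟩
  | succ k ih =>
    obtain ⟨hi, hp, hl⟩ := ih
    have hinv : Irrational (GA α k)⁻¹ := hi.inv
    have hfr : Irrational (Int.fract (GA α k)⁻¹) := by
      unfold Int.fract
      exact hinv.sub_intCast _
    refine ⟨by rwa [GA_succ], ?_, ?_⟩
    · rw [GA_succ]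
      exact lt_of_le_of_ne (Int.fract_nonneg _)
        (fun h => hfr ⟨0, by push_cast; exact h⟩)
    · rw [GA_succ]; exact Int.fract_lt_one _

lemma cfA_succ (k : ℕ) : cfA α (k+1) = ⌊(GA α k)⁻¹⌋₊ := by
  simp [cfA, GA]

lemma GA_inv_pos (hir : Irrational α) (h0 : 0 < α) (h1 : α < 1) (k : ℕ) :
    1 < (GA α k)⁻¹ := by
  obtain ⟨_, hp, hl⟩ := GA_mem hir h0 h1 k
  exact (one_lt_inv₀ hp).2 hl

lemma inv_eq (hir : Irrational α) (h0 : 0 < α) (h1 : α < 1) (k : ℕ) :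
    (GA α k)⁻¹ = (cfA α (k+1) : ℝ) + GA α (k+1) := by
  have h := GA_inv_pos hir h0 h1 k
  rw [cfA_succ, GA_succ, Int.fract]
  rw [natCast_floor_eq_intCast_floor (by linarith)]
  ring

lemma cfA_pos (hir : Irrational α) (h0 : 0 < α) (h1 : α < 1) (k : ℕ) :
    1 ≤ cfA α (k+1) := by
  rw [cfA_succ]
  exact (Nat.one_le_floor_iff _).mpr (le_of_lt (GA_inv_pos hir h0 h1 k))

lemma B_succ (k : ℕ) : B α (k+1) = B α k * GA α (k+1) := by
  rw [B, B, Finset.prod_range_succ]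

lemma B_pos (hir : Irrational α) (h0 : 0 < α) (h1 : α < 1) (k : ℕ) : 0 < B α k := by
  apply Finset.prod_pos
  intro j _
  exact (GA_mem hir h0 h1 j).2.1

lemma B_anti (hir : Irrational α) (h0 : 0 < α) (h1 : α < 1) (k : ℕ) :
    B α (k+1) ≤ B α k := by
  rw [B_succ]
  have h := GA_mem hir h0 h1 (k+1)
  nlinarith [B_pos hir h0 h1 k]

lemma cfQ_pos (hir : Irrational α) (h0 : 0 < α) (h1 : α < 1) (k : ℕ) :
    1 ≤ cfQ α k := by
  induction k using Nat.twoStepInduction with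
  | zero => simp [cfQ]
  | one => simpa [cfQ] using cfA_pos hir h0 h1 0
  | more k ih _ =>
    have : cfQ α (k+2) = cfA α (k+2) * cfQ α (k+1) + cfQ α k := rfl
    omega

lemma cfQ_mono (hir : Irrational α) (h0 : 0 < α) (h1 : α < 1) (k : ℕ) :
    cfQ α k ≤ cfQ α (k+1) := by
  cases k with
  | zero => simpa [cfQ] using cfA_pos hir h0 h1 0
  | succ k =>
    have h1' : cfQ α (k+2) = cfA α (k+2) * cfQ α (k+1) + cfQ α k := rfl
    have h2 := cfA_pos hir h0 h1 (k+1)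
    have h3 := cfQ_pos hir h0 h1 (k+1)
    nlinarith

lemma theta (hir : Irrational α) (h0 : 0 < α) (h1 : α < 1) (k : ℕ) :
    (cfQ α k : ℝ) * α - (cfP α k : ℝ) = (-1)^k * B α k := by
  induction k using Nat.twoStepInduction with
  | zero => simp [cfQ, cfP, B, GA_zero]
  | one =>
    have h := inv_eq hir h0 h1 0
    have hα : α ≠ 0 := ne_of_gt h0
    have : (cfA α 1 : ℝ) = α⁻¹ - GA α 1 := by
      have := inv_eq hir h0 h1 0
      rw [GA_zero] at this; linarith
    simp only [cfQ, cfP, B]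
    rw [Finset.prod_range_succ, Finset.prod_range_one, GA_zero]
    rw [this]
    field_simp; push_cast; ring
  | more k ih1 ih2 =>
    have hq : (cfQ α (k+2) : ℝ) = (cfA α (k+2) : ℝ) * cfQ α (k+1) + cfQ α k := by
      have : cfQ α (k+2) = cfA α (k+2) * cfQ α (k+1) + cfQ α k := rfl
      rw [this]; push_cast; ring
    have hp : (cfP α (k+2) : ℝ) = (cfA α (k+2) : ℝ) * cfP α (k+1) + cfP α k := by
      have : cfP α (k+2) = cfA α (k+2) * cfP α (k+1) + cfP α k := rfl
      rw [this]; push_cast; ring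
    have ha : (cfA α (k+2) : ℝ) = (GA α (k+1))⁻¹ - GA α (k+2) := by
      have := inv_eq hir h0 h1 (k+1); linarith
    have hA1 : GA α (k+1) ≠ 0 := ne_of_gt (GA_mem hir h0 h1 (k+1)).2.1
    have hB : B α (k+2) = B α (k+1) * GA α (k+2) := B_succ (k+1)
    have hB' : B α (k+1) = B α k * GA α (k+1) := B_succ k
    have key : (GA α (k+1))⁻¹ * B α (k+1) = B α k := by
      rw [hB']; field_simp
    calc (cfQ α (k+2) : ℝ) * α - (cfP α (k+2) : ℝ)
        = (cfA α (k+2) : ℝ) * ((cfQ α (k+1) : ℝ) * α - cfP α (k+1))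
          + ((cfQ α k : ℝ) * α - cfP α k) := by rw [hq, hp]; ring
      _ = ((GA α (k+1))⁻¹ - GA α (k+2)) * ((-1)^(k+1) * B α (k+1))
          + (-1)^k * B α k := by rw [ha, ih2, ih1]
      _ = (-1)^(k+1) * ((GA α (k+1))⁻¹ * B α (k+1)) 
          - (-1)^(k+1) * (GA α (k+2) * B α (k+1)) + (-1)^k * B α k := by ring
      _ = (-1)^(k+1) * B α k - (-1)^(k+1) * B α (k+2) + (-1)^k * B α k := by
          rw [key, hB]; ring
      _ = (-1)^(k+2) * B α (k+2) := by ring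

lemma keyid (hir : Irrational α) (h0 : 0 < α) (h1 : α < 1) (k : ℕ) :
    B α k * (cfQ α (k+1) : ℝ) + B α (k+1) * (cfQ α k : ℝ) = 1 := by
  induction k with
  | zero =>
    have ha : (cfA α 1 : ℝ) = α⁻¹ - GA α 1 := by
      have := inv_eq hir h0 h1 0
      rw [GA_zero] at this; linarith
    have hα : α ≠ 0 := ne_of_gt h0
    simp only [cfQ]
    rw [show B α 0 = α from by simp [B, GA_zero], B_succ, 
      show B α 0 = α from by simp [B, GA_zero], ha]
    push_cast
    field_simp; ring
  | succ k ih =>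
    have hq : (cfQ α (k+2) : ℝ) = (cfA α (k+2) : ℝ) * cfQ α (k+1) + cfQ α k := by
      have : cfQ α (k+2) = cfA α (k+2) * cfQ α (k+1) + cfQ α k := rfl
      rw [this]; push_cast; ring
    have ha : (cfA α (k+2) : ℝ) = (GA α (k+1))⁻¹ - GA α (k+2) := by
      have := inv_eq hir h0 h1 (k+1); linarith
    have hA1 : GA α (k+1) ≠ 0 := ne_of_gt (GA_mem hir h0 h1 (k+1)).2.1
    have hB : B α (k+2) = B α (k+1) * GA α (k+2) := B_succ (k+1)
    have hB' : B α (k+1) = B α k * GA α (k+1) := B_succ k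
    have key : (GA α (k+1))⁻¹ * B α (k+1) = B α k := by
      rw [hB']; field_simp
    calc B α (k+1) * (cfQ α (k+2) : ℝ) + B α (k+2) * (cfQ α (k+1) : ℝ)
        = B α (k+1) * (((GA α (k+1))⁻¹ - GA α (k+2)) * cfQ α (k+1) + cfQ α k)
          + (B α (k+1) * GA α (k+2)) * (cfQ α (k+1) : ℝ) := by rw [hq, ha, hB]
      _ = ((GA α (k+1))⁻¹ * B α (k+1)) * cfQ α (k+1) + B α (k+1) * cfQ α k := by ring
      _ = B α k * (cfQ α (k+1) : ℝ) + B α (k+1) * (cfQ α k : ℝ) := by rw [key]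
      _ = 1 := ih

lemma step (hir : Irrational α) (h0 : 0 < α) (h1 : α < 1) (k' m0 i : ℕ)
    (hi : i ∈ Finset.Ioc m0 (m0 + cfQ α (k'+1))) :
    ∃ i' ∈ Finset.Ioc m0 (m0 + cfQ α (k'+1)), ∃ z : ℤ,
      B α k' ≤ (i' : ℝ) * α - ((i:ℝ)*α + z) ∧
        (i' : ℝ) * α - ((i:ℝ)*α + z) ≤ B α k' + B α (k'+1) := by
  simp only [Finset.mem_Ioc] at hi ⊢
  have hQ'Q : cfQ α k' ≤ cfQ α (k'+1) := cfQ_mono hir h0 h1 k'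
  have hb := B_pos hir h0 h1 k'
  have hb' := B_pos hir h0 h1 (k'+1)
  have ht' := theta hir h0 h1 k'
  have ht := theta hir h0 h1 (k'+1)
  rcases Nat.even_or_odd k' with he | ho
  · have e1 : (cfQ α k' : ℝ) * α - (cfP α k' : ℝ) = B α k' := by
      rw [ht', he.neg_one_pow, one_mul]
    have e2 : (cfQ α (k'+1) : ℝ) * α - (cfP α (k'+1) : ℝ) = -(B α (k'+1)) := by
      rw [ht, (he.add_one).neg_one_pow]; ring
    by_cases hc : i + cfQ α k' ≤ m0 + cfQ α (k'+1)
    · refine ⟨i + cfQ α k', ⟨by omega, hc⟩, (cfP α k' : ℤ), ?_⟩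
      have hv : ((i + cfQ α k' : ℕ) : ℝ) * α - ((i:ℝ)*α + ((cfP α k' : ℤ) : ℝ))
          = B α k' := by push_cast; linarith [e1]
      rw [hv]; constructor
      · exact le_rfl
      · linarith
    · push_neg at hc
      refine ⟨i + cfQ α k' - cfQ α (k'+1), ⟨by omega, by omega⟩,
        (cfP α k' : ℤ) - (cfP α (k'+1) : ℤ), ?_⟩
      have hcast : ((i + cfQ α k' - cfQ α (k'+1) : ℕ) : ℝ)
          = (i:ℝ) + (cfQ α k' : ℝ) - (cfQ α (k'+1) : ℝ) := by
        have hle : cfQ α (k'+1) ≤ i + cfQ α k' := by omega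
        push_cast [hle]; ring
      have hv : ((i + cfQ α k' - cfQ α (k'+1) : ℕ) : ℝ) * α
          - ((i:ℝ)*α + (((cfP α k' : ℤ) - (cfP α (k'+1) : ℤ)) : ℝ))
          = B α k' + B α (k'+1) := by
        rw [hcast]; push_cast; nlinarith [e1, e2]
      push_cast at hv ⊢
      constructor <;> linarith
  · have e1 : (cfQ α k' : ℝ) * α - (cfP α k' : ℝ) = -(B α k') := by
      rw [ht', ho.neg_one_pow]; ring
    have e2 : (cfQ α (k'+1) : ℝ) * α - (cfP α (k'+1) : ℝ) = B α (k'+1) := by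
      rw [ht, (Even.neg_one_pow (by exact Odd.add_one ho)), one_mul]
    by_cases hc : m0 + cfQ α k' < i
    · refine ⟨i - cfQ α k', ⟨by omega, by omega⟩, -(cfP α k' : ℤ), ?_⟩
      have hcast : ((i - cfQ α k' : ℕ) : ℝ) = (i:ℝ) - (cfQ α k' : ℝ) := by
        have hle : cfQ α k' ≤ i := by omega
        push_cast [hle]; ring
      have hv : ((i - cfQ α k' : ℕ) : ℝ) * α - ((i:ℝ)*α + ((-(cfP α k' : ℤ)) : ℝ))
          = B α k' := by rw [hcast]; push_cast; nlinarith [e1]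
      push_cast at hv ⊢
      constructor <;> linarith
    · push_neg at hc
      refine ⟨i + (cfQ α (k'+1) - cfQ α k'), ⟨by omega, by omega⟩,
        (cfP α (k'+1) : ℤ) - (cfP α k' : ℤ), ?_⟩
      have hcast : ((i + (cfQ α (k'+1) - cfQ α k') : ℕ) : ℝ)
          = (i:ℝ) + (cfQ α (k'+1) : ℝ) - (cfQ α k' : ℝ) := by
        push_cast [hQ'Q]; ring
      have hv : ((i + (cfQ α (k'+1) - cfQ α k') : ℕ) : ℝ) * α
          - ((i:ℝ)*α + (((cfP α (k'+1) : ℤ) - (cfP α k' : ℤ)) : ℝ))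
          = B α k' + B α (k'+1) := by
        rw [hcast]; push_cast; nlinarith [e1, e2]
      push_cast at hv ⊢
      constructor <;> linarith

lemma cross (hir : Irrational α) (h0 : 0 < α) (h1 : α < 1) (k' m0 : ℕ) (y : ℝ) :
    ∃ i ∈ Finset.Ioc m0 (m0 + cfQ α (k'+1)), ∃ z : ℤ,
      y ≤ (i:ℝ)*α - z ∧ (i:ℝ)*α - z < y + (B α k' + B α (k'+1)) := by
  have hb := B_pos hir h0 h1 k'
  have hb' := B_pos hir h0 h1 (k'+1)
  have main : ∀ n : ℕ, ∀ i ∈ Finset.Ioc m0 (m0 + cfQ α (k'+1)), ∀ z : ℤ,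
      (i:ℝ)*α - z ≤ y → y - ((i:ℝ)*α - z) ≤ n * B α k' →
      ∃ i' ∈ Finset.Ioc m0 (m0 + cfQ α (k'+1)), ∃ z' : ℤ,
        y ≤ (i':ℝ)*α - z' ∧ (i':ℝ)*α - z' < y + (B α k' + B α (k'+1)) := by
    intro n
    induction n with
    | zero =>
      intro i hi z hle hga
      have heq : (i:ℝ)*α - z = y := by push_cast at hga; linarith
      exact ⟨i, hi, z, le_of_eq heq.symm, by rw [heq]; linarith⟩
    | succ n ih =>
      intro i hi z hle hga
      rcases eq_or_lt_of_le hle with heq | hlt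
      · exact ⟨i, hi, z, le_of_eq heq.symm, by rw [heq]; linarith⟩
      · obtain ⟨i', hi', z', hlo, hhi⟩ := step hir h0 h1 k' m0 i hi
        have hcast : ((z + z' : ℤ) : ℝ) = (z:ℝ) + (z':ℝ) := by push_cast; ring
        by_cases hy : y ≤ (i':ℝ)*α - ((z + z' : ℤ) : ℝ)
        · refine ⟨i', hi', z + z', hy, ?_⟩
          rw [hcast]
          push_cast at hlo hhi
          linarith
        · push_neg at hy
          apply ih i' hi' (z + z') hy.le
          rw [hcast]
          push_cast at hga hlo hhi
          linarith
  obtain ⟨n, hn⟩ := exists_nat_ge (1 / B α k')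
  have hQ1 : 1 ≤ cfQ α (k'+1) := cfQ_pos hir h0 h1 (k'+1)
  have hnb : 1 ≤ (n:ℝ) * B α k' := by
    rw [div_le_iff₀ hb] at hn
    linarith
  refine main n (m0+1) (by simp only [Finset.mem_Ioc]; omega)
    ⌈((m0+1 : ℕ):ℝ)*α - y⌉ ?_ ?_
  · have := Int.le_ceil (((m0+1 : ℕ):ℝ)*α - y); linarith
  · have := Int.ceil_lt_add_one (((m0+1 : ℕ):ℝ)*α - y); linarith

lemma harm (J : ℕ) : Real.log (J+1) ≤ ∑ j ∈ Finset.range J, 1/((j:ℝ)+1) := by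
  have tele := Finset.sum_range_sub (fun i : ℕ => Real.log ((i:ℝ)+1)) J
  push_cast at tele
  norm_num at tele
  rw [← tele, sub_le_iff_le_add, ← Finset.sum_add_distrib]
  apply Finset.sum_le_sum
  intro j _
  have hp1 : (0:ℝ) < (j:ℝ)+1 := by positivity
  have hp2 : (0:ℝ) < (j:ℝ)+1+1 := by positivity
  have h := Real.log_le_sub_one_of_pos (show (0:ℝ) < ((j:ℝ)+1+1)/((j:ℝ)+1) by positivity)
  rw [Real.log_div (ne_of_gt hp2) (ne_of_gt hp1)] at h
  have heq : ((j:ℝ)+1+1)/((j:ℝ)+1) - 1 = 1/((j:ℝ)+1) := by field_simp; ring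
  linarith [h, heq]

lemma nd_le (x : ℝ) (z : ℤ) : nd x ≤ |x - z| := round_le x z

lemma nd_pos {m : ℕ} (hir : Irrational α) (hm : 1 ≤ m) : 0 < nd ((m:ℝ)*α) := by
  have hirr : Irrational ((m:ℝ) * α) := hir.natCast_mul (by omega)
  rw [nd, abs_pos, sub_ne_zero]
  exact fun h => hirr.ne_int _ h

lemma block (hir : Irrational α) (h0 : 0 < α) (h1 : α < 1) (k' m0 : ℕ)
    (hq16 : 16 ≤ cfQ α (k'+1)) :
    (cfQ α (k'+1) : ℝ)/4 * Real.log (cfQ α (k'+1)) ≤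
      ∑ m ∈ Finset.Ioc m0 (m0 + cfQ α (k'+1)), 1 / nd ((m:ℝ) * α) := by
  set Q := cfQ α (k'+1) with hQdef
  set b := B α k' with hbdef
  set b' := B α (k'+1) with hb'def
  set g := b + b' with hgdef
  have hb : 0 < b := B_pos hir h0 h1 k'
  have hb' : 0 < b' := B_pos hir h0 h1 (k'+1)
  have hg0 : 0 < g := by positivity
  have hQ1 : (1:ℝ) ≤ (Q:ℝ) := by exact_mod_cast cfQ_pos hir h0 h1 (k'+1)
  have hQ16 : (16:ℝ) ≤ (Q:ℝ) := by exact_mod_cast hq16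
  have hgQ : g * (Q:ℝ) ≤ 2 := by
    have hid := keyid hir h0 h1 k'
    have hQ'1 : (1:ℝ) ≤ (cfQ α k' : ℝ) := by exact_mod_cast cfQ_pos hir h0 h1 k'
    have hbb' : b' ≤ b := B_anti hir h0 h1 k'
    have hb'Q' : 0 < b' * (cfQ α k' : ℝ) := mul_pos hb' (by linarith)
    have hb'Q : b' * (Q:ℝ) ≤ b * (Q:ℝ) := mul_le_mul_of_nonneg_right hbb' (by linarith)
    have hexp : g * (Q:ℝ) = b * (Q:ℝ) + b' * (Q:ℝ) := by rw [hgdef]; ring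
    linarith
  clear_value Q b b' g
  set J := Q / 4 with hJdef
  clear_value J
  have hJle : (J:ℝ) ≤ (Q:ℝ)/4 := by
    have h := Nat.cast_div_le (α := ℝ) (m := Q) (n := 4)
    rw [hJdef]
    simpa using h
  have hJg : (J:ℝ) * g ≤ 1/2 := by
    have h1' : (J:ℝ) * g ≤ (Q:ℝ)/4 * g := mul_le_mul_of_nonneg_right hJle hg0.le
    have h2' : (Q:ℝ)/4 * g = (g * (Q:ℝ))/4 := by ring
    linarith
  have hQJ : (Q:ℝ) < ((J:ℝ)+1)*4 := by
    have h4 := Nat.div_add_mod Q 4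
    have h5 : Q % 4 < 4 := Nat.mod_lt _ (by norm_num)
    have : Q < (J+1)*4 := by omega
    exact_mod_cast this
  -- selection
  have hsel : ∀ j : ℕ, ∃ p : ℕ × ℤ, p.1 ∈ Finset.Ioc m0 (m0 + Q) ∧
      (j:ℝ)*g ≤ (p.1:ℝ)*α - p.2 ∧ (p.1:ℝ)*α - p.2 < (j:ℝ)*g + g := by
    intro j
    obtain ⟨i, hi, z, hz1, hz2⟩ := cross hir h0 h1 k' m0 ((j:ℝ)*g)
    rw [hQdef]
    rw [hgdef, hbdef, hb'def] at hz1 hz2 ⊢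
    exact ⟨⟨i, z⟩, hi, hz1, hz2⟩
  choose f hm hv1 hv2 using hsel
  have hval : ∀ j, j < J → 0 < (((f j).1:ℝ)*α - (f j).2) ∧
      (((f j).1:ℝ)*α - (f j).2) < 1/2 := by
    intro j hj
    have hjg : (0:ℝ) ≤ (j:ℝ)*g := by positivity
    have h1m : 1 ≤ (f j).1 := by
      have := hm j; simp only [Finset.mem_Ioc] at this; omega
    constructor
    · rcases lt_or_eq_of_le (le_trans hjg (hv1 j)) with h | h
      · exact h
      · exfalso
        have hirr : Irrational (((f j).1:ℝ) * α) := hir.natCast_mul (by omega)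
        exact hirr.ne_int (f j).2 (by linarith)
    · have hj1 : ((j:ℝ)+1) ≤ (J:ℝ) := by exact_mod_cast hj
      have := hv2 j
      nlinarith
  have hinj : ∀ j ∈ Finset.range J, ∀ j' ∈ Finset.range J,
      (f j).1 = (f j').1 → j = j' := by
    intro j hj j' hj' hEq
    simp only [Finset.mem_range] at hj hj'
    have hvj := hval j hj
    have hvj' := hval j' hj'
    have h1 := hv1 j; have h2 := hv2 j
    have h3 := hv1 j'; have h4 := hv2 j'
    rw [hEq] at h1 h2 hvj
    have habs : |(((f j').2 - (f j).2 : ℤ) : ℝ)| < 1 := by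
      push_cast
      rw [abs_lt]
      constructor <;> linarith [hvj.1, hvj.2, hvj'.1, hvj'.2]
    have hzz : (f j').2 = (f j).2 := by
      have h5 : |(((f j').2 - (f j).2 : ℤ) : ℝ)| < 1 := habs
      rw [← Int.cast_abs] at h5
      have h6 : |((f j').2 - (f j).2 : ℤ)| < 1 := by exact_mod_cast h5
      have := Int.abs_lt_one_iff.mp h6
      omega
    rw [hzz] at h3 h4
    have : (j:ℝ) < (j':ℝ)+1 := by
      have hx := lt_of_le_of_lt h1 h4
      have hlt : (j:ℝ)*g < ((j':ℝ)+1)*g := by rw [add_mul, one_mul]; linarith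
      exact (mul_lt_mul_iff_of_pos_right hg0).mp hlt
    have h' : (j':ℝ) < (j:ℝ)+1 := by
      have hx := lt_of_le_of_lt h3 h2
      have hlt : (j':ℝ)*g < ((j:ℝ)+1)*g := by rw [add_mul, one_mul]; linarith
      exact (mul_lt_mul_iff_of_pos_right hg0).mp hlt
    have hjj : j < j'+1 := by exact_mod_cast this
    have hjj' : j' < j+1 := by exact_mod_cast h'
    omega
  -- sum comparison
  have hterm : ∀ j ∈ Finset.range J, 1/(((j:ℝ)+1)*g) ≤ 1 / nd (((f j).1:ℝ)*α) := by
    intro j hj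
    simp only [Finset.mem_range] at hj
    have h1m : 1 ≤ (f j).1 := by
      have := hm j; simp only [Finset.mem_Ioc] at this; omega
    have hndp : 0 < nd (((f j).1:ℝ)*α) := nd_pos hir h1m
    apply one_div_le_one_div_of_le hndp
    have hle : nd (((f j).1:ℝ)*α) ≤ |(((f j).1:ℝ)*α - (f j).2)| := nd_le _ _
    have hvpos := (hval j hj).1
    rw [abs_of_pos hvpos] at hle
    have := hv2 j
    nlinarith
  have hlog1 : Real.log ((J:ℝ)+1) ≤ ∑ j ∈ Finset.range J, 1/((j:ℝ)+1) := harm J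
  have hsum1 : (1/g) * Real.log ((J:ℝ)+1) ≤ ∑ j ∈ Finset.range J, 1/(((j:ℝ)+1)*g) := by
    have : ∑ j ∈ Finset.range J, 1/(((j:ℝ)+1)*g) 
        = (1/g) * ∑ j ∈ Finset.range J, 1/((j:ℝ)+1) := by
      rw [Finset.mul_sum]
      apply Finset.sum_congr rfl
      intro j _
      field_simp
    rw [this]
    apply mul_le_mul_of_nonneg_left hlog1 (by positivity)
  have hsum2 : ∑ j ∈ Finset.range J, 1/(((j:ℝ)+1)*g)
      ≤ ∑ m ∈ Finset.Ioc m0 (m0 + Q), 1 / nd ((m:ℝ) * α) := by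
    calc ∑ j ∈ Finset.range J, 1/(((j:ℝ)+1)*g)
        ≤ ∑ j ∈ Finset.range J, 1 / nd (((f j).1:ℝ)*α) := Finset.sum_le_sum hterm
      _ = ∑ m ∈ (Finset.range J).image (fun j => (f j).1), 1 / nd ((m:ℝ)*α) := by
          rw [Finset.sum_image hinj]
      _ ≤ ∑ m ∈ Finset.Ioc m0 (m0 + Q), 1 / nd ((m:ℝ) * α) := by
          apply Finset.sum_le_sum_of_subset_of_nonneg
          · intro m hmm
            simp only [Finset.mem_image] at hmm
            obtain ⟨j, _, rfl⟩ := hmm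
            exact hm j
          · intro m _ _
            exact one_div_nonneg.mpr (abs_nonneg _)
  -- final numeric chain
  have hlogQ0 : 0 ≤ Real.log (Q:ℝ) := Real.log_nonneg hQ1
  have h1g : (Q:ℝ)/2 ≤ 1/g := by
    rw [div_le_div_iff₀ (by norm_num) hg0]
    linarith
  have hlogJ : (1/2) * Real.log (Q:ℝ) ≤ Real.log ((J:ℝ)+1) := by
    have hstep1 : Real.log ((Q:ℝ)/4) ≤ Real.log ((J:ℝ)+1) := by
      apply Real.log_le_log (by linarith)
      linarith
    have hstep2 : Real.log ((Q:ℝ)/4) = Real.log (Q:ℝ) - Real.log 4 :=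
      Real.log_div (by linarith) (by norm_num)
    have hstep3 : Real.log 16 ≤ Real.log (Q:ℝ) := Real.log_le_log (by norm_num) hQ16
    have hstep4 : Real.log (16:ℝ) = 2 * Real.log 4 := by
      rw [show (16:ℝ) = 4^2 by norm_num, Real.log_pow]
      push_cast; ring
    linarith
  have hfin : (Q:ℝ)/4 * Real.log (Q:ℝ) ≤ (1/g) * Real.log ((J:ℝ)+1) := by
    have hJ1 : 0 ≤ Real.log ((J:ℝ)+1) := Real.log_nonneg
      (by have : (0:ℝ) ≤ (J:ℝ) := Nat.cast_nonneg J; linarith)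
    have hmm := mul_le_mul h1g hlogJ (by linarith [hlogQ0]) (by positivity)
    have heq2 : (Q:ℝ)/2 * ((1/2)*Real.log (Q:ℝ)) = (Q:ℝ)/4 * Real.log (Q:ℝ) := by ring
    linarith
  linarith

end SLB

theorem sum_lower_bound :
    ∃ c : ℝ, 0 < c ∧ ∀ α : ℝ, Irrational α → α ∈ Set.Ico (0:ℝ) 1 →
      ∀ M k : ℕ, cfQ α k ≤ M → M < cfQ α (k+1) →
        c * M * Real.log (cfQ α k) ≤ S α M := by
  refine ⟨1/8, by norm_num, ?_⟩
  intro α hir hmem M k hqM _hq'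
  obtain ⟨h0', h1⟩ := hmem
  have h0 : 0 < α := lt_of_le_of_ne h0' (fun h => hir ⟨0, by rw [← h]; norm_num⟩)
  have hM1 : 1 ≤ M := le_trans (SLB.cfQ_pos hir h0 h1 k) hqM
  have hnonneg : ∀ m : ℕ, 0 ≤ 1 / nd ((m:ℝ) * α) :=
    fun m => one_div_nonneg.mpr (abs_nonneg _)
  by_cases hsmall : cfQ α k < 16
  · have hS : 2*(M:ℝ) ≤ S α M := by
      rw [S]
      have hterm : ∀ m ∈ Finset.Icc 1 M, (2:ℝ) ≤ 1 / nd ((m:ℝ) * α) := by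
        intro m hmm
        simp only [Finset.mem_Icc] at hmm
        have hp : 0 < nd ((m:ℝ)*α) := SLB.nd_pos hir hmm.1
        have hhalf : nd ((m:ℝ)*α) ≤ 1/2 := abs_sub_round _
        rw [le_div_iff₀ hp]
        linarith
      calc 2*(M:ℝ) = ∑ _m ∈ Finset.Icc 1 M, (2:ℝ) := by
            rw [Finset.sum_const, Nat.card_Icc]
            simp only [Nat.add_sub_cancel, nsmul_eq_mul]
            ring
        _ ≤ _ := Finset.sum_le_sum hterm
    have hqpos : (1:ℝ) ≤ (cfQ α k : ℝ) := by exact_mod_cast SLB.cfQ_pos hir h0 h1 k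
    have hlog15 : Real.log (cfQ α k) ≤ 15 := by
      have hle := Real.log_le_sub_one_of_pos (show (0:ℝ) < (cfQ α k : ℝ) by linarith)
      have : (cfQ α k : ℝ) ≤ 16 := by exact_mod_cast le_of_lt hsmall
      linarith
    have hlog0 : 0 ≤ Real.log (cfQ α k) := Real.log_nonneg hqpos
    have hM0 : (0:ℝ) ≤ (M:ℝ) := Nat.cast_nonneg M
    calc (1/8) * (M:ℝ) * Real.log (cfQ α k) ≤ (1/8) * M * 15 := by nlinarith
      _ ≤ 2 * M := by linarith
      _ ≤ S α M := hS
  · push_neg at hsmall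
    obtain ⟨k', rfl⟩ : ∃ k', k = k'+1 := by
      cases k with
      | zero => exfalso; norm_num [cfQ] at hsmall
      | succ k' => exact ⟨k', rfl⟩
    set Q := cfQ α (k'+1) with hQdef
    set R := M / Q with hRdef
    have hQpos : 1 ≤ Q := SLB.cfQ_pos hir h0 h1 (k'+1)
    have hRQM : R * Q ≤ M := by rw [hRdef]; exact Nat.div_mul_le_self M Q
    have hblock : ∀ r : ℕ, (Q:ℝ)/4 * Real.log (Q:ℝ) ≤
        ∑ m ∈ Finset.Ioc (r*Q) (r*Q + Q), 1 / nd ((m:ℝ)*α) :=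
      fun r => SLB.block hir h0 h1 k' (r*Q) hsmall
    have hsplit : ∀ n : ℕ, (n:ℝ) * ((Q:ℝ)/4 * Real.log (Q:ℝ)) ≤
        ∑ m ∈ Finset.Ioc 0 (n*Q), 1 / nd ((m:ℝ)*α) := by
      intro n
      induction n with
      | zero => simp
      | succ n ih =>
        have hle1 : (0:ℕ) ≤ n*Q := Nat.zero_le _
        have hle2 : n*Q ≤ n*Q + Q := Nat.le_add_right _ _
        have hcons := Finset.sum_Ioc_consecutive (fun m : ℕ => 1 / nd ((m:ℝ)*α)) hle1 hle2
        have hmul : (n+1)*Q = n*Q + Q := by ring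
        rw [hmul, ← hcons]
        push_cast
        have hbn := hblock n
        linarith
    have hsub : ∑ m ∈ Finset.Ioc 0 (R*Q), 1 / nd ((m:ℝ)*α) ≤ S α M := by
      rw [S]
      apply Finset.sum_le_sum_of_subset_of_nonneg
      · intro m hmm
        simp only [Finset.mem_Ioc, Finset.mem_Icc] at hmm ⊢
        omega
      · intro m _ _
        exact hnonneg m
    have hdm := Nat.div_add_mod M Q
    have hmod : M % Q < Q := Nat.mod_lt _ (by omega)
    have hR1 : 1 ≤ R := by
      rw [hRdef]
      exact (Nat.one_le_div_iff (by omega)).mpr hqM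
    have h2 : M < R * Q + Q := by
      calc M = Q * (M / Q) + M % Q := hdm.symm
        _ < Q * (M / Q) + Q := by omega
        _ = M / Q * Q + Q := by ring
    have hQR : Q ≤ R * Q := Nat.le_mul_of_pos_left Q hR1
    have hRQr : (M:ℝ)/2 ≤ (R:ℝ)*(Q:ℝ) := by
      have hc1 : (M:ℝ) < (R:ℝ)*(Q:ℝ) + (Q:ℝ) := by exact_mod_cast h2
      have hc2 : (Q:ℝ) ≤ (R:ℝ)*(Q:ℝ) := by exact_mod_cast hQR
      linarith
    have hlogQ0 : 0 ≤ Real.log (Q:ℝ) := Real.log_nonneg (by exact_mod_cast hQpos)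
    have hchain := le_trans (hsplit R) hsub
    calc (1/8) * (M:ℝ) * Real.log (Q:ℝ)
        = ((M:ℝ)/2) * ((1/4) * Real.log (Q:ℝ)) := by ring
      _ ≤ ((R:ℝ)*(Q:ℝ)) * ((1/4) * Real.log (Q:ℝ)) :=
          mul_le_mul_of_nonneg_right hRQr (by linarith)
      _ = (R:ℝ) * ((Q:ℝ)/4 * Real.log (Q:ℝ)) := by ring
      _ ≤ S α M := hchain
end

section
/- Let α ∈ [0,1) be irrational with continued fraction expansion [a_1, a_2, ...] and convergent denominators q_k. There is an absolute constant C > 0 such that for all M and k with q_k ≤ M < q_{k+1}, Σ_{m=1}^M 1/‖mα‖ ≤ C (M log q_k + a_{k+1} M). -/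
open Filter MeasureTheory Real

namespace CFX
variable (α : ℝ)

noncomputable def bet (n : ℕ) : ℝ := gaussMap^[n] α

noncomputable def QQ : ℕ → ℕ
  | 0 => 0
  | 1 => 1
  | (n+2) => cfA α (n+1) * QQ (n+1) + QQ n

noncomputable def PP : ℕ → ℕ
  | 0 => 1
  | 1 => 0
  | (n+2) => cfA α (n+1) * PP (n+1) + PP n

noncomputable def dd (n : ℕ) : ℝ := ∏ j ∈ Finset.range n, bet α j

variable {α}

theorem bet_mem (hα : Irrational α) (h0 : 0 < α) (h1 : α < 1) :
    ∀ n, Irrational (bet α n) ∧ 0 < bet α n ∧ bet α n < 1 := by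
  intro n
  induction n with
  | zero => exact ⟨hα, h0, h1⟩
  | succ n ih =>
    obtain ⟨hirr, hpos, hlt⟩ := ih
    have hstep : bet α (n+1) = Int.fract (bet α n)⁻¹ := by
      simp [bet, Function.iterate_succ_apply', gaussMap]
    have hirr' : Irrational (Int.fract (bet α n)⁻¹) := by
      unfold Int.fract
      exact hirr.inv.sub_intCast _
    have hne : Int.fract (bet α n)⁻¹ ≠ 0 := fun h => hirr' ⟨0, by rw [h]; simp⟩
    refine ⟨by rwa [hstep], ?_, ?_⟩
    · rw [hstep]
      exact lt_of_le_of_ne (Int.fract_nonneg _) (Ne.symm hne)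
    · rw [hstep]; exact Int.fract_lt_one _

theorem cfA_eq (n : ℕ) : cfA α (n+1) = ⌊(bet α n)⁻¹⌋₊ := rfl

theorem key (hα : Irrational α) (h0 : 0 < α) (h1 : α < 1) (n : ℕ) :
    bet α n * ((cfA α (n+1) : ℝ) + bet α (n+1)) = 1 := by
  obtain ⟨hirr, hpos, hlt⟩ := bet_mem hα h0 h1 n
  have hstep : bet α (n+1) = Int.fract (bet α n)⁻¹ := by
    simp [bet, Function.iterate_succ_apply', gaussMap]
  have hinvpos : (0:ℝ) ≤ (bet α n)⁻¹ := by positivity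
  have hcast : ((cfA α (n+1) : ℕ) : ℝ) = (⌊(bet α n)⁻¹⌋ : ℝ) := by
    rw [cfA_eq]
    exact_mod_cast congrArg (fun z : ℤ => (z : ℝ)) (Int.natCast_floor_eq_floor hinvpos)
  rw [hstep, hcast, Int.fract]
  have : (⌊(bet α n)⁻¹⌋ : ℝ) + ((bet α n)⁻¹ - ⌊(bet α n)⁻¹⌋) = (bet α n)⁻¹ := by ring
  rw [this, mul_inv_cancel₀ (ne_of_gt hpos)]

theorem cfA_pos (hα : Irrational α) (h0 : 0 < α) (h1 : α < 1) (n : ℕ) :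
    1 ≤ cfA α (n+1) := by
  obtain ⟨hirr, hpos, hlt⟩ := bet_mem hα h0 h1 n
  rw [cfA_eq]
  have : (1:ℝ) ≤ (bet α n)⁻¹ := le_of_lt ((one_lt_inv_iff₀).2 ⟨hpos, hlt⟩)
  exact Nat.le_floor (by exact_mod_cast this)

theorem dd_succ (n : ℕ) : dd α (n+1) = dd α n * bet α n := Finset.prod_range_succ _ _

theorem dd_pos (hα : Irrational α) (h0 : 0 < α) (h1 : α < 1) (n : ℕ) : 0 < dd α n :=
  Finset.prod_pos fun j _ => (bet_mem hα h0 h1 j).2.1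

theorem dd_zero : dd α 0 = 1 := Finset.prod_range_zero _

theorem dd_one : dd α 1 = α := by simp [dd, bet]

theorem dd_lt (hα : Irrational α) (h0 : 0 < α) (h1 : α < 1) (n : ℕ) :
    dd α (n+1) < dd α n := by
  rw [dd_succ]
  have hd := dd_pos hα h0 h1 n
  nlinarith [(bet_mem hα h0 h1 n).2.2, (bet_mem hα h0 h1 n).2.1]

theorem dd_rec (hα : Irrational α) (h0 : 0 < α) (h1 : α < 1) (n : ℕ) :
    dd α n = (cfA α (n+1) : ℝ) * dd α (n+1) + dd α (n+2) := by
  rw [dd_succ, dd_succ, dd_succ]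
  have h := key hα h0 h1 n
  linear_combination (- dd α n) * h

theorem QQ_rec (n : ℕ) : QQ α (n+2) = cfA α (n+1) * QQ α (n+1) + QQ α n := rfl
theorem PP_rec (n : ℕ) : PP α (n+2) = cfA α (n+1) * PP α (n+1) + PP α n := rfl

theorem QQ_pos (hα : Irrational α) (h0 : 0 < α) (h1 : α < 1) :
    ∀ n, 1 ≤ QQ α (n+1) := by
  intro n
  induction n with
  | zero => exact le_refl 1
  | succ n ih =>
    rw [QQ_rec]
    calc 1 ≤ QQ α (n+1) := ih
    _ ≤ cfA α (n+1) * QQ α (n+1) + QQ α n :=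
      le_add_right (Nat.le_mul_of_pos_left _ (cfA_pos hα h0 h1 n))

theorem QQ_mono (hα : Irrational α) (h0 : 0 < α) (h1 : α < 1) :
    ∀ n, QQ α n ≤ QQ α (n+1) := by
  intro n
  cases n with
  | zero => exact Nat.zero_le 1
  | succ n =>
    rw [QQ_rec]
    calc QQ α (n+1) ≤ cfA α (n+1) * QQ α (n+1) :=
      Nat.le_mul_of_pos_left _ (cfA_pos hα h0 h1 n)
    _ ≤ _ := Nat.le_add_right _ _

theorem det (n : ℕ) :
    (PP α n : ℤ) * QQ α (n+1) - PP α (n+1) * QQ α n = (-1)^n := by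
  induction n with
  | zero => simp [QQ, PP]
  | succ n ih =>
    rw [QQ_rec, PP_rec]
    push_cast
    push_cast at ih
    ring_nf
    ring_nf at ih
    linear_combination (-1 : ℤ) * ih

noncomputable def DD (α : ℝ) (n : ℕ) : ℝ := (QQ α n : ℝ) * α - PP α n

theorem DD_rec (n : ℕ) : DD α (n+2) = (cfA α (n+1) : ℝ) * DD α (n+1) + DD α n := by
  unfold DD
  rw [QQ_rec, PP_rec]
  push_cast
  ring

theorem DD_eq (hα : Irrational α) (h0 : 0 < α) (h1 : α < 1) :
    ∀ n, DD α n = (-1)^(n+1) * dd α n := by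
  have H : ∀ n, DD α n = (-1)^(n+1) * dd α n ∧ DD α (n+1) = (-1)^(n+2) * dd α (n+1) := by
    intro n
    induction n with
    | zero =>
      constructor
      · simp [DD, QQ, PP, dd_zero]
      · simp [DD, QQ, PP, dd_one]
    | succ n ih =>
      refine ⟨ih.2, ?_⟩
      rw [DD_rec, ih.1, ih.2]
      have h := dd_rec hα h0 h1 n
      have hs : ((-1:ℝ))^(n+3) = -((-1)^(n+2)) := by ring
      have hs2 : ((-1:ℝ))^(n+2) = (-1)^(n+1) * (-1) := by ring
      calc (cfA α (n+1) : ℝ) * ((-1)^(n+2) * dd α (n+1)) + (-1)^(n+1) * dd α n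
          = (-1)^(n+3) * ((dd α n) - (cfA α (n+1) : ℝ) * dd α (n+1)) := by ring
        _ = (-1)^(n+3) * dd α (n+2) := by rw [h]; ring
  exact fun n => (H n).1

theorem ident (hα : Irrational α) (h0 : 0 < α) (h1 : α < 1) :
    ∀ n, (QQ α (n+1) : ℝ) * dd α n + (QQ α n : ℝ) * dd α (n+1) = 1 := by
  intro n
  induction n with
  | zero => simp [QQ, dd_zero]
  | succ n ih =>
    have h := dd_rec hα h0 h1 n
    have hq : ((QQ α (n+2) : ℕ) : ℝ) = (cfA α (n+1) : ℝ) * QQ α (n+1) + QQ α n := by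
      rw [QQ_rec]; push_cast; ring
    rw [hq]
    linear_combination ih - (QQ α (n+1) : ℝ) * h

theorem dd_ge (hα : Irrational α) (h0 : 0 < α) (h1 : α < 1) (n : ℕ) :
    1 ≤ 2 * (QQ α (n+1) : ℝ) * dd α n := by
  have h := ident hα h0 h1 n
  have h1' : (QQ α n : ℝ) ≤ QQ α (n+1) := by exact_mod_cast QQ_mono hα h0 h1 n
  have h2 : dd α (n+1) ≤ dd α n := le_of_lt (dd_lt hα h0 h1 n)
  have h3 : (0:ℝ) ≤ QQ α n := Nat.cast_nonneg _
  have h4 : 0 < dd α (n+1) := dd_pos hα h0 h1 (n+1)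
  nlinarith

theorem dd_le_inv (hα : Irrational α) (h0 : 0 < α) (h1 : α < 1) (n : ℕ) :
    (QQ α (n+1) : ℝ) * dd α n ≤ 1 := by
  have h := ident hα h0 h1 n
  have h3 : (0:ℝ) ≤ QQ α n := Nat.cast_nonneg _
  have h4 : 0 < dd α (n+1) := dd_pos hα h0 h1 (n+1)
  nlinarith

set_option maxHeartbeats 1600000 in
theorem BA (hα : Irrational α) (h0 : 0 < α) (h1 : α < 1) :
    ∀ n (m : ℕ) (z : ℤ), 1 ≤ m → m < QQ α (n+1) → dd α n ≤ |(m:ℝ) * α - z| := by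
  intro n
  cases n with
  | zero =>
    intro m z hm hmq
    exfalso
    have : QQ α (0+1) = 1 := rfl
    omega
  | succ N =>
    intro m z hm hmq
    have hdet : (PP α N : ℤ) * QQ α (N+1) - PP α (N+1) * QQ α N = (-1)^N := det N
    have hε2 : ((-1:ℤ)^N) * ((-1:ℤ)^N) = 1 := by rw [← mul_pow]; norm_num
    obtain ⟨x, y, hx, hy⟩ : ∃ x y : ℤ,
        x * QQ α (N+1) + y * QQ α N = (m:ℤ) ∧ x * PP α (N+1) + y * PP α N = z :=
      ⟨(-1)^N * ((m:ℤ) * PP α N - z * QQ α N),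
       (-1)^N * (z * QQ α (N+1) - (m:ℤ) * PP α (N+1)),
       by linear_combination ((-1:ℤ)^N * m) * hdet + (m:ℤ) * hε2,
       by linear_combination ((-1:ℤ)^N * z) * hdet + z * hε2⟩
    have hxR := congrArg (fun t : ℤ => (t:ℝ)) hx
    have hyR := congrArg (fun t : ℤ => (t:ℝ)) hy
    push_cast at hxR hyR
    have habs : (m:ℝ) * α - z = (x:ℝ) * DD α (N+1) + (y:ℝ) * DD α N := by
      unfold DD
      linear_combination (-α) * hxR + hyR
    have e1 : (x:ℝ) * DD α (N+1) + (y:ℝ) * DD α N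
        = (-1:ℝ)^(N+1) * ((y:ℝ) * dd α N - (x:ℝ) * dd α (N+1)) := by
      rw [DD_eq hα h0 h1, DD_eq hα h0 h1]; ring
    have e2 : |(m:ℝ) * α - z| = |(y:ℝ) * dd α N - (x:ℝ) * dd α (N+1)| := by
      rw [habs, e1, abs_mul, abs_pow, abs_neg, abs_one, one_pow, one_mul]
    rw [e2]
    -- facts
    have hd0 : 0 < dd α N := dd_pos hα h0 h1 N
    have hd1 : 0 < dd α (N+1) := dd_pos hα h0 h1 (N+1)
    have hd2 : 0 < dd α (N+2) := dd_pos hα h0 h1 (N+2)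
    have hdlt : dd α (N+1) < dd α N := dd_lt hα h0 h1 N
    have hrec : dd α N = (cfA α (N+1) : ℝ) * dd α (N+1) + dd α (N+2) := dd_rec hα h0 h1 N
    have hA : (1:ℤ) ≤ (cfA α (N+1) : ℤ) := by exact_mod_cast cfA_pos hα h0 h1 N
    have hQ1 : (1:ℤ) ≤ (QQ α (N+1) : ℤ) := by exact_mod_cast QQ_pos hα h0 h1 N
    have hQ0 : (0:ℤ) ≤ (QQ α N : ℤ) := by positivity
    have hm' : (1:ℤ) ≤ (m:ℤ) := by exact_mod_cast hm
    have hmQ' : (m:ℤ) < (QQ α (N+2) : ℤ) := by exact_mod_cast hmq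
    have hQrec : (QQ α (N+2) : ℤ) = (cfA α (N+1) : ℤ) * QQ α (N+1) + QQ α N := by
      have := QQ_rec (α := α) N
      exact_mod_cast congrArg (fun t : ℕ => (t:ℤ)) this
    rcases eq_or_ne y 0 with hy0 | hy0
    · -- y = 0 : x ≥ 1
      subst hy0
      have hx1 : (1:ℤ) ≤ x := by
        by_contra hc
        push_neg at hc
        have hx0 : x ≤ 0 := by omega
        have hxq : x * (QQ α (N+1) : ℤ) ≤ 0 :=
          mul_nonpos_of_nonpos_of_nonneg hx0 (by omega)
        linarith
      have hx1R : (1:ℝ) ≤ (x:ℝ) := by exact_mod_cast hx1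
      refine le_abs.mpr (Or.inr ?_)
      push_cast
      nlinarith [mul_nonneg (by linarith : (0:ℝ) ≤ (x:ℝ) - 1) hd1.le]
    · rcases eq_or_ne x 0 with hx0 | hx0
      · -- x = 0 : y ≥ 1
        subst hx0
        have hy1 : (1:ℤ) ≤ y := by
          by_contra hc
          push_neg at hc
          have hyq : y * (QQ α N : ℤ) ≤ 0 :=
            mul_nonpos_of_nonpos_of_nonneg (by omega) hQ0
          linarith
        have hy1R : (1:ℝ) ≤ (y:ℝ) := by exact_mod_cast hy1
        refine le_abs.mpr (Or.inl ?_)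
        push_cast
        nlinarith [mul_nonneg (by linarith : (0:ℝ) ≤ (y:ℝ) - 1) hd0.le]
      · rcases lt_or_gt_of_ne hx0 with hxneg | hxpos
        · rcases lt_or_gt_of_ne hy0 with hyneg | hypos
          · -- x < 0, y < 0 : impossible
            exfalso
            have hxq : x * (QQ α (N+1) : ℤ) ≤ -1 * (QQ α (N+1) : ℤ) :=
              mul_le_mul_of_nonneg_right (by omega) (by omega)
            have hyq : y * (QQ α N : ℤ) ≤ 0 :=
              mul_nonpos_of_nonpos_of_nonneg (by omega) hQ0
            linarith
          · -- x < 0, y > 0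
            have hxR' : (x:ℝ) ≤ -1 := by exact_mod_cast (by omega : x ≤ -1)
            have hyR' : (1:ℝ) ≤ (y:ℝ) := by exact_mod_cast (by omega : (1:ℤ) ≤ y)
            refine le_abs.mpr (Or.inl ?_)
            nlinarith [mul_nonneg (by linarith : (0:ℝ) ≤ (y:ℝ) - 1) hd0.le,
              mul_nonneg (by linarith : (0:ℝ) ≤ -(x:ℝ) - 1) hd1.le]
        · rcases lt_or_gt_of_ne hy0 with hyneg | hypos
          · -- x > 0, y < 0
            have hxR' : (1:ℝ) ≤ (x:ℝ) := by exact_mod_cast (by omega : (1:ℤ) ≤ x)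
            have hyR' : (y:ℝ) ≤ -1 := by exact_mod_cast (by omega : y ≤ -1)
            refine le_abs.mpr (Or.inr ?_)
            nlinarith [mul_nonneg (by linarith : (0:ℝ) ≤ (x:ℝ) - 1) hd1.le,
              mul_nonneg (by linarith : (0:ℝ) ≤ -(y:ℝ) - 1) hd0.le]
          · -- x > 0, y > 0 : main case
            have hy1 : (1:ℤ) ≤ y := by omega
            have hxle : x ≤ y * (cfA α (N+1) : ℤ) - 1 := by
              by_contra hc
              push_neg at hc
              have h1' : y * (cfA α (N+1) : ℤ) ≤ x := by omega
              have p1 : 0 ≤ (x - y * (cfA α (N+1) : ℤ)) * QQ α (N+1) :=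
                mul_nonneg (by omega) (by omega)
              have p2 : 0 ≤ (y - 1) * ((cfA α (N+1) : ℤ) * QQ α (N+1)) :=
                mul_nonneg (by omega) (mul_nonneg (by omega) (by omega))
              have p3 : 0 ≤ (y - 1) * (QQ α N : ℤ) := mul_nonneg (by omega) hQ0
              nlinarith [p1, p2, p3]
            have hxleR : (x:ℝ) ≤ (y:ℝ) * (cfA α (N+1) : ℝ) - 1 := by exact_mod_cast hxle
            have hy1R : (1:ℝ) ≤ (y:ℝ) := by exact_mod_cast hy1
            refine le_abs.mpr (Or.inl ?_)
            rw [hrec]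
            nlinarith [mul_nonneg (sub_nonneg.2 hxleR) hd1.le,
              mul_nonneg (by linarith : (0:ℝ) ≤ (y:ℝ) - 1) hd2.le]

theorem cfQ_eq : ∀ n, cfQ α n = QQ α (n+1) := by
  have H : ∀ n, cfQ α n = QQ α (n+1) ∧ cfQ α (n+1) = QQ α (n+2) := by
    intro n
    induction n with
    | zero =>
      constructor
      · rfl
      · show cfA α 1 = QQ α 2
        rw [QQ_rec]
        simp [QQ]
    | succ n ih =>
      refine ⟨ih.2, ?_⟩
      show cfA α (n+2) * cfQ α (n+1) + cfQ α n = QQ α (n+3)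
      rw [ih.1, ih.2, QQ_rec (α := α) (n+1)]
  exact fun n => (H n).1

theorem floor_abs_lt {a b : ℝ} (ha : 0 ≤ a) (hb : 0 ≤ b) (h : ⌊a⌋₊ = ⌊b⌋₊) :
    |a - b| < 1 := by
  have h1 : a < ⌊a⌋₊ + 1 := Nat.lt_floor_add_one a
  have h2 : b < ⌊b⌋₊ + 1 := Nat.lt_floor_add_one b
  have h3 : (⌊a⌋₊ : ℝ) ≤ a := Nat.floor_le ha
  have h4 : (⌊b⌋₊ : ℝ) ≤ b := Nat.floor_le hb
  rw [abs_lt]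
  constructor <;> [skip; skip] <;> rw [h] at * <;> linarith

set_option maxHeartbeats 1600000 in
theorem block_sum (hα : Irrational α) (h0 : 0 < α) (h1 : α < 1) (k M t : ℕ)
    (hMq : M < QQ α (k+2)) :
    ∑ m ∈ (Finset.Icc 1 M).filter (fun m => (m - 1) / QQ α (k+1) = t), 1 / nd (m * α)
      ≤ 4 * (QQ α (k+2) : ℝ) + 4 * (QQ α (k+1) : ℝ) * (1 + Real.log (QQ α (k+1))) := by
  set q : ℕ := QQ α (k+1) with hqdef
  have hq1 : 1 ≤ q := QQ_pos hα h0 h1 k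
  have hq1R : (1:ℝ) ≤ q := by exact_mod_cast hq1
  set B := (Finset.Icc 1 M).filter (fun m => (m - 1) / q = t) with hBdef
  set f : ℕ → ℝ := fun m => (m:ℝ) * α - round ((m:ℝ) * α) with hfdef
  have hnd : ∀ m : ℕ, nd ((m:ℝ) * α) = |f m| := fun m => rfl
  have hmemB : ∀ m ∈ B, 1 ≤ m ∧ m ≤ M ∧ t * q ≤ m - 1 ∧ m - 1 < t * q + q := by
    intro m hm
    rw [hBdef, Finset.mem_filter, Finset.mem_Icc] at hm
    obtain ⟨⟨hm1, hm2⟩, hm3⟩ := hm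
    refine ⟨hm1, hm2, ?_, ?_⟩
    · have h' : (m-1)/q * q ≤ m - 1 := Nat.div_mul_le_self _ _
      rwa [hm3] at h'
    · have h0' : (m-1)/q < t+1 := by omega
      have h' : m - 1 < (t+1) * q := (Nat.div_lt_iff_lt_mul (by omega)).1 h0'
      rwa [Nat.succ_mul] at h'
  have hlow : ∀ m ∈ B, dd α (k+1) ≤ |f m| := by
    intro m hm
    obtain ⟨hm1, hm2, -, -⟩ := hmemB m hm
    exact BA hα h0 h1 (k+1) m (round ((m:ℝ)*α)) hm1 (lt_of_le_of_lt hm2 hMq)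
  have hd1pos : 0 < dd α (k+1) := dd_pos hα h0 h1 (k+1)
  have hfpos : ∀ m ∈ B, 0 < |f m| := fun m hm => lt_of_lt_of_le hd1pos (hlow m hm)
  have hhalf : ∀ m : ℕ, |f m| ≤ 1/2 := fun m => abs_sub_round _
  set ι : ℕ → ℕ × Bool := fun m => (⌊2*(q:ℝ)*|f m|⌋₊, decide (0 < f m)) with hιdef
  -- injectivity
  have hkey : ∀ a ∈ B, ∀ b ∈ B, ι a = ι b → b < a → False := by
    intro a ha b hb hi hba
    obtain ⟨ha1, ha2, ha3, ha4⟩ := hmemB a ha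
    obtain ⟨hb1, hb2, hb3, hb4⟩ := hmemB b hb
    have hj1 : 1 ≤ a - b := by omega
    have hj2 : a - b < q := by omega
    -- separation
    have hsep : dd α k ≤ |f a - f b| := by
      have heq : f a - f b
          = ((a - b : ℕ) : ℝ) * α - ((round ((a:ℝ)*α) - round ((b:ℝ)*α) : ℤ) : ℝ) := by
        simp only [hfdef]
        push_cast [Nat.cast_sub hba.le]
        ring
      rw [heq]
      exact BA hα h0 h1 k (a-b) (round ((a:ℝ)*α) - round ((b:ℝ)*α)) hj1 hj2
    -- closeness
    have hfl : ⌊2*(q:ℝ)*|f a|⌋₊ = ⌊2*(q:ℝ)*|f b|⌋₊ := congrArg Prod.fst hi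
    have hsign : (0 < f a) ↔ (0 < f b) := by
      have := congrArg Prod.snd hi
      simpa [hιdef] using this
    have habs' : abs (2*(q:ℝ)*|f a| - 2*(q:ℝ)*|f b|) < 1 :=
      floor_abs_lt (by positivity) (by positivity) hfl
    have hsame : |f a - f b| = abs (|f a| - |f b|) := by
      rcases lt_or_ge 0 (f a) with hfa | hfa
      · have hfb := hsign.1 hfa
        rw [abs_of_pos hfa, abs_of_pos hfb]
      · have hfb : f b ≤ 0 := by
          by_contra hc
          push_neg at hc
          exact absurd (hsign.2 hc) (not_lt.2 hfa)
        rw [abs_of_nonpos hfa, abs_of_nonpos hfb]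
        rw [show -f a - -f b = -(f a - f b) from by ring, abs_neg]
    rw [hsame] at hsep
    have hddk : 1 ≤ 2*(q:ℝ)*dd α k := dd_ge hα h0 h1 k
    have hmul : abs (2*(q:ℝ)*|f a| - 2*(q:ℝ)*|f b|) = 2*(q:ℝ) * abs (|f a| - |f b|) := by
      rw [show 2*(q:ℝ)*|f a| - 2*(q:ℝ)*|f b| = 2*(q:ℝ)*(|f a| - |f b|) from by ring,
        abs_mul, abs_of_nonneg (by positivity : (0:ℝ) ≤ 2*(q:ℝ))]
    rw [hmul] at habs'
    nlinarith [mul_le_mul_of_nonneg_left hsep (by positivity : (0:ℝ) ≤ 2*(q:ℝ))]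
  have hinj : Set.InjOn ι B := by
    intro a ha b hb hi
    rcases lt_trichotomy a b with h | h | h
    · exact absurd (hkey b hb a ha hi.symm h) not_false
    · exact h
    · exact absurd (hkey a ha b hb hi h) not_false
  set g : ℕ × Bool → ℝ := fun p => if p.1 = 0 then 2*(QQ α (k+2):ℝ) else 2*(q:ℝ)/p.1
    with hgdef
  have hgnonneg : ∀ p : ℕ × Bool, 0 ≤ g p := by
    intro p
    rw [hgdef]
    dsimp only
    split
    · positivity
    · positivity
  have hpoint : ∀ m ∈ B, 1 / |f m| ≤ g (ι m) := by
    intro m hm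
    rw [hgdef, hιdef]
    dsimp only
    by_cases hi0 : ⌊2*(q:ℝ)*|f m|⌋₊ = 0
    · rw [if_pos hi0]
      have h2Q : 1 ≤ 2*(QQ α (k+2):ℝ)*dd α (k+1) := dd_ge hα h0 h1 (k+1)
      rw [div_le_iff₀ (hfpos m hm)]
      nlinarith [h2Q, mul_le_mul_of_nonneg_left (hlow m hm)
        (by positivity : (0:ℝ) ≤ 2*(QQ α (k+2):ℝ))]
    · rw [if_neg hi0]
      have hi1 : 1 ≤ ⌊2*(q:ℝ)*|f m|⌋₊ := by omega
      have hile : (⌊2*(q:ℝ)*|f m|⌋₊ : ℝ) ≤ 2*(q:ℝ)*|f m| := Nat.floor_le (by positivity)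
      have hipos : (0:ℝ) < (⌊2*(q:ℝ)*|f m|⌋₊ : ℝ) := by exact_mod_cast hi1
      rw [div_le_div_iff₀ (hfpos m hm) hipos]
      linarith
  have hsub : B.image ι ⊆ (Finset.range (q+1)) ×ˢ (Finset.univ : Finset Bool) := by
    intro p hp
    rw [Finset.mem_image] at hp
    obtain ⟨m, hm, rfl⟩ := hp
    rw [Finset.mem_product, Finset.mem_range]
    refine ⟨Nat.lt_succ_of_le ?_, Finset.mem_univ _⟩
    have : 2*(q:ℝ)*|f m| ≤ (q:ℝ) := by nlinarith [hhalf m, hq1R]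
    calc ⌊2*(q:ℝ)*|f m|⌋₊ ≤ ⌊(q:ℝ)⌋₊ := Nat.floor_le_floor this
    _ = q := Nat.floor_natCast q
  have hharm : ∑ i ∈ Finset.range q, 2*(q:ℝ)/(i+1) ≤ 2*(q:ℝ)*(1 + Real.log q) := by
    have hc : ∑ i ∈ Finset.range q, 2*(q:ℝ)/(i+1)
        = 2*(q:ℝ) * ((harmonic q : ℚ) : ℝ) := by
      unfold harmonic
      push_cast
      rw [Finset.mul_sum]
      refine Finset.sum_congr rfl fun i _ => ?_
      rw [div_eq_mul_inv]
    rw [hc]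
    have := harmonic_le_one_add_log q
    nlinarith [this, hq1R]
  calc ∑ m ∈ B, 1 / nd ((m:ℝ) * α)
      = ∑ m ∈ B, 1 / |f m| := by
        refine Finset.sum_congr rfl fun m _ => ?_
        rw [hnd]
    _ ≤ ∑ m ∈ B, g (ι m) := Finset.sum_le_sum fun m hm => hpoint m hm
    _ = ∑ p ∈ B.image ι, g p := (Finset.sum_image (fun a ha b hb h => hinj ha hb h)).symm
    _ ≤ ∑ p ∈ (Finset.range (q+1)) ×ˢ (Finset.univ : Finset Bool), g p :=
        Finset.sum_le_sum_of_subset_of_nonneg hsub (fun p _ _ => hgnonneg p)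
    _ = ∑ i ∈ Finset.range (q+1), (g (i, true) + g (i, false)) := by
        rw [Finset.sum_product]
        exact Finset.sum_congr rfl fun i _ => by rw [Fintype.sum_bool]
    _ = ∑ i ∈ Finset.range (q+1), 2 * (if i = 0 then 2*(QQ α (k+2):ℝ) else 2*(q:ℝ)/i) := by
        refine Finset.sum_congr rfl fun i _ => ?_
        rw [hgdef]
        dsimp only
        ring
    _ ≤ 4 * (QQ α (k+2) : ℝ) + 4 * (q:ℝ) * (1 + Real.log q) := by
        rw [Finset.sum_range_succ']
        simp only [if_pos rfl, Nat.succ_ne_zero, if_neg (Nat.succ_ne_zero _)]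
        push_cast
        have : ∑ i ∈ Finset.range q, 2 * (2*(q:ℝ)/((i:ℝ)+1))
            = 2 * ∑ i ∈ Finset.range q, 2*(q:ℝ)/((i:ℝ)+1) := by
          rw [Finset.mul_sum]
        rw [this]
        nlinarith [hharm]

end CFX

theorem sum_upper_bound :
    ∃ C : ℝ, 0 < C ∧ ∀ α : ℝ, Irrational α → α ∈ Set.Ico (0:ℝ) 1 →
      ∀ M k : ℕ, cfQ α k ≤ M → M < cfQ α (k+1) →
        S α M ≤ C * ((M : ℝ) * Real.log (cfQ α k) + (cfA α (k+1) : ℝ) * M) := by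
  refine ⟨24, by norm_num, ?_⟩
  intro α hα hmem M k hqM hMq
  have h0 : 0 < α := hmem.1.lt_of_ne (fun h => hα ⟨0, by simp [← h]⟩)
  have h1 : α < 1 := hmem.2
  rw [CFX.cfQ_eq] at hqM hMq
  rw [CFX.cfQ_eq]
  have hq1 : 1 ≤ CFX.QQ α (k+1) := CFX.QQ_pos hα h0 h1 k
  have hq1R : (1:ℝ) ≤ (CFX.QQ α (k+1) : ℝ) := by exact_mod_cast hq1
  have hA1 : 1 ≤ cfA α (k+1) := CFX.cfA_pos hα h0 h1 k
  have hM1 : 1 ≤ M := le_trans hq1 hqM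
  have hmaps : ∀ m ∈ Finset.Icc 1 M, (m-1)/(CFX.QQ α (k+1)) ∈ Finset.range ((M-1)/(CFX.QQ α (k+1)) + 1) := by
    intro m hm
    rw [Finset.mem_Icc] at hm
    rw [Finset.mem_range]
    have : (m-1)/(CFX.QQ α (k+1)) ≤ (M-1)/(CFX.QQ α (k+1)) := Nat.div_le_div_right (by omega)
    omega
  have hsplit := Finset.sum_fiberwise_of_maps_to hmaps (fun m => 1 / nd ((m:ℝ) * α))
  have hS : S α M = ∑ t ∈ Finset.range ((M-1)/(CFX.QQ α (k+1)) + 1),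
      ∑ m ∈ (Finset.Icc 1 M).filter (fun m => (m - 1) / (CFX.QQ α (k+1)) = t),
        1 / nd ((m:ℝ) * α) := by
    rw [S, ← hsplit]
  have hblock : ∀ t ∈ Finset.range ((M-1)/(CFX.QQ α (k+1)) + 1),
      (∑ m ∈ (Finset.Icc 1 M).filter (fun m => (m - 1) / (CFX.QQ α (k+1)) = t),
        1 / nd ((m:ℝ) * α))
      ≤ 4 * (CFX.QQ α (k+2) : ℝ) + 4 * (CFX.QQ α (k+1) : ℝ)
          * (1 + Real.log (CFX.QQ α (k+1))) :=
    fun t _ => CFX.block_sum hα h0 h1 k M t hMq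
  have hST : S α M ≤ (((M-1)/(CFX.QQ α (k+1)) + 1 : ℕ) : ℝ)
      * (4 * (CFX.QQ α (k+2) : ℝ) + 4 * (CFX.QQ α (k+1) : ℝ)
          * (1 + Real.log (CFX.QQ α (k+1)))) := by
    rw [hS]
    calc _ ≤ ∑ _t ∈ Finset.range ((M-1)/(CFX.QQ α (k+1)) + 1),
          (4 * (CFX.QQ α (k+2) : ℝ) + 4 * (CFX.QQ α (k+1) : ℝ)
            * (1 + Real.log (CFX.QQ α (k+1)))) := Finset.sum_le_sum hblock
    _ = _ := by rw [Finset.sum_const, Finset.card_range, nsmul_eq_mul]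
  have hTqN : ((M-1)/(CFX.QQ α (k+1)) + 1) * CFX.QQ α (k+1) ≤ 2 * M := by
    have h' : ((M-1)/(CFX.QQ α (k+1))) * CFX.QQ α (k+1) ≤ M - 1 := Nat.div_mul_le_self _ _
    rw [Nat.succ_mul]
    calc ((M-1)/(CFX.QQ α (k+1))) * CFX.QQ α (k+1) + CFX.QQ α (k+1)
        ≤ (M - 1) + M := Nat.add_le_add h' hqM
    _ ≤ 2 * M := by omega
  have hTq : (((M-1)/(CFX.QQ α (k+1)) + 1 : ℕ) : ℝ) * (CFX.QQ α (k+1) : ℝ) ≤ 2 * M := by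
    calc (((M-1)/(CFX.QQ α (k+1)) + 1 : ℕ) : ℝ) * (CFX.QQ α (k+1) : ℝ)
        = ((((M-1)/(CFX.QQ α (k+1)) + 1) * CFX.QQ α (k+1) : ℕ) : ℝ) := by push_cast; ring
    _ ≤ ((2 * M : ℕ) : ℝ) := by exact_mod_cast hTqN
    _ = 2 * M := by push_cast; ring
  have hQ2 : (CFX.QQ α (k+2) : ℝ) ≤ ((cfA α (k+1) : ℝ) + 1) * CFX.QQ α (k+1) := by
    have h' : CFX.QQ α (k+2) = cfA α (k+1) * CFX.QQ α (k+1) + CFX.QQ α k := CFX.QQ_rec k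
    have h'' : (CFX.QQ α k : ℝ) ≤ CFX.QQ α (k+1) := by
      exact_mod_cast CFX.QQ_mono hα h0 h1 k
    rw [h']
    push_cast
    linarith
  have hT0 : (0:ℝ) ≤ (((M-1)/(CFX.QQ α (k+1)) + 1 : ℕ) : ℝ) := Nat.cast_nonneg _
  have hlog : 0 ≤ Real.log (CFX.QQ α (k+1)) := Real.log_nonneg hq1R
  have hM0 : (0:ℝ) ≤ M := Nat.cast_nonneg _
  have hA1R : (1:ℝ) ≤ (cfA α (k+1) : ℝ) := by exact_mod_cast hA1
  have c1 : (((M-1)/(CFX.QQ α (k+1)) + 1 : ℕ) : ℝ) * (CFX.QQ α (k+2):ℝ)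
      ≤ ((cfA α (k+1):ℝ)+1) * (2*M) := by
    calc (((M-1)/(CFX.QQ α (k+1)) + 1 : ℕ) : ℝ) * (CFX.QQ α (k+2):ℝ)
        ≤ (((M-1)/(CFX.QQ α (k+1)) + 1 : ℕ) : ℝ) * (((cfA α (k+1):ℝ)+1) * CFX.QQ α (k+1)) :=
          mul_le_mul_of_nonneg_left hQ2 hT0
    _ = ((cfA α (k+1):ℝ)+1) * ((((M-1)/(CFX.QQ α (k+1)) + 1 : ℕ) : ℝ) * CFX.QQ α (k+1)) := by
          ring
    _ ≤ ((cfA α (k+1):ℝ)+1) * (2*M) := mul_le_mul_of_nonneg_left hTq (by linarith)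
  have c2 : (((M-1)/(CFX.QQ α (k+1)) + 1 : ℕ) : ℝ) * (CFX.QQ α (k+1):ℝ)
        * Real.log (CFX.QQ α (k+1)) ≤ 2*M*Real.log (CFX.QQ α (k+1)) :=
    mul_le_mul_of_nonneg_right hTq hlog
  have c3 : (1:ℝ)*M ≤ (cfA α (k+1):ℝ)*M := mul_le_mul_of_nonneg_right hA1R hM0
  have c4 : 0 ≤ (M:ℝ) * Real.log (CFX.QQ α (k+1)) := mul_nonneg hM0 hlog
  nlinarith [hST, c1, c2, c3, c4]
end

section
/- If α is of bounded type (its continued fraction partial quotients are bounded), then there exist constants c, C > 0 (depending on α) such that c·M·log M ≤ Σ_{m=1}^M 1/‖mα‖ ≤ C·M·log M for all M ≥ 2. -/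
open Filter MeasureTheory Real

lemma nd_nonneg (x : ℝ) : 0 ≤ nd x := abs_nonneg _

lemma nd_le_half (x : ℝ) : nd x ≤ 1/2 := abs_sub_round x

lemma nd_le_abs_sub_int (x : ℝ) (n : ℤ) : nd x ≤ |x - n| := by
  rcases eq_or_ne n (round x) with rfl | h
  · exact le_refl _
  · have h1 : (1 : ℝ) ≤ |(round x : ℝ) - n| := by
      have : round x - n ≠ 0 := sub_ne_zero.mpr (by exact_mod_cast Ne.symm h)
      have := Int.one_le_abs this
      calc (1:ℝ) ≤ |(round x - n : ℤ)| := by exact_mod_cast this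
        _ = |(round x : ℝ) - n| := by push_cast; ring_nf
    have h2 : |(round x : ℝ) - n| ≤ |x - round x| + |x - n| := by
      have := abs_sub_abs_le_abs_sub ((round x : ℝ) - n) 0
      calc |(round x : ℝ) - n| = |(round x : ℝ) - x + (x - n)| := by ring_nf
        _ ≤ |(round x : ℝ) - x| + |x - n| := abs_add_le _ _
        _ = |x - round x| + |x - n| := by rw [abs_sub_comm]
    have h3 := abs_sub_round x
    unfold nd
    linarith

section CF
variable {α : ℝ} (hα : Irrational α) (hmem : α ∈ Set.Ico (0:ℝ) 1)

noncomputable def aseq (α : ℝ) (k : ℕ) : ℝ := gaussMap^[k] α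

include hα hmem in
lemma aseq_props : ∀ k, Irrational (aseq α k) ∧ aseq α k ∈ Set.Ioo (0:ℝ) 1 := by
  intro k
  induction k with
  | zero =>
    refine ⟨hα, lt_of_le_of_ne hmem.1 ?_, hmem.2⟩
    exact fun h => hα.ne_int 0 (by simpa [aseq] using h.symm)
  | succ n ih =>
    obtain ⟨hirr, h0, h1⟩ := ih
    have : aseq α (n+1) = Int.fract (aseq α n)⁻¹ := by
      simp [aseq, Function.iterate_succ_apply', gaussMap]
    rw [this]
    have hinv : Irrational (aseq α n)⁻¹ := hirr.inv
    have hfr : Irrational (Int.fract (aseq α n)⁻¹) := by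
      rw [Int.fract]
      exact hinv.sub_intCast _
    refine ⟨hfr, lt_of_le_of_ne (Int.fract_nonneg _) ?_, Int.fract_lt_one _⟩
    exact fun h => hfr.ne_int 0 (by simpa using h.symm)

lemma cfA_eq (α : ℝ) (k : ℕ) : cfA α (k+1) = ⌊(aseq α k)⁻¹⌋₊ := by
  simp [cfA, aseq]

include hα hmem in
lemma aseq_inv_eq (k : ℕ) :
    (aseq α k)⁻¹ = (cfA α (k+1) : ℝ) + aseq α (k+1) := by
  have h := (aseq_props hα hmem k).2
  have hnext : aseq α (k+1) = Int.fract (aseq α k)⁻¹ := by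
    simp [aseq, Function.iterate_succ_apply', gaussMap]
  have hpos : 0 < (aseq α k)⁻¹ := inv_pos.2 h.1
  rw [cfA_eq, natCast_floor_eq_intCast_floor hpos.le, hnext, Int.fract]
  ring

include hα hmem in
lemma one_lt_aseq_inv (k : ℕ) : 1 < (aseq α k)⁻¹ :=
  (one_lt_inv₀ (aseq_props hα hmem k).2.1).mpr (aseq_props hα hmem k).2.2

include hα hmem in
lemma cfA_pos (k : ℕ) : 1 ≤ cfA α (k+1) := by
  rw [cfA_eq]
  have := one_lt_aseq_inv hα hmem k
  exact Nat.le_floor (by exact_mod_cast this.le)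

noncomputable def Dd (α : ℝ) (k : ℕ) : ℝ := (cfQ α k : ℝ) * α - (cfP α k : ℝ)

include hα hmem in
lemma D_succ : ∀ k, Dd α (k+1) = -(aseq α (k+1)) * Dd α k := by
  intro k
  induction k with
  | zero =>
    have h := aseq_inv_eq hα hmem 0
    have h0 : aseq α 0 = α := rfl
    have hne : α ≠ 0 := fun h' => hα.ne_int 0 (by simpa using h')
    simp only [Dd, cfQ, cfP]
    rw [h0] at h
    field_simp at h
    push_cast
    nlinarith [h]
  | succ n ih =>
    have h := aseq_inv_eq hα hmem (n+1)
    have hpos : 0 < aseq α (n+1) := (aseq_props hα hmem (n+1)).2.1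
    have hne : aseq α (n+1) ≠ 0 := ne_of_gt hpos
    have hQ : (cfQ α (n+2) : ℝ) = (cfA α (n+2) : ℝ) * cfQ α (n+1) + cfQ α n := by
      simp [cfQ]
    have hP : (cfP α (n+2) : ℝ) = (cfA α (n+2) : ℝ) * cfP α (n+1) + cfP α n := by
      simp [cfP]
    have hrec : Dd α (n+2) = (cfA α (n+2) : ℝ) * Dd α (n+1) + Dd α n := by
      simp only [Dd, hQ, hP]; ring
    have hDn : Dd α n = -(aseq α (n+1))⁻¹ * Dd α (n+1) := by
      rw [ih]; field_simp
    rw [hrec, hDn, h]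
    field_simp
    ring

include hα hmem in
lemma D_sign : ∀ k, 0 < (-1 : ℝ)^k * Dd α k := by
  intro k
  induction k with
  | zero =>
    have : α ≠ 0 := fun h' => hα.ne_int 0 (by simpa using h')
    simp [Dd, cfQ, cfP]
    exact lt_of_le_of_ne hmem.1 (Ne.symm this)
  | succ n ih =>
    rw [D_succ hα hmem n]
    have hpos : 0 < aseq α (n+1) := (aseq_props hα hmem (n+1)).2.1
    have : (-1:ℝ)^(n+1) * (-(aseq α (n+1)) * Dd α n)
        = aseq α (n+1) * ((-1:ℝ)^n * Dd α n) := by ring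
    rw [this]
    positivity

include hα hmem in
lemma absD_eq (k : ℕ) : |Dd α k| = (-1:ℝ)^k * Dd α k := by
  rcases Nat.even_or_odd k with he | ho
  · rw [he.neg_one_pow]
    have := D_sign hα hmem k
    rw [he.neg_one_pow] at this
    rw [abs_of_pos (by linarith)]; ring
  · rw [ho.neg_one_pow]
    have := D_sign hα hmem k
    rw [ho.neg_one_pow] at this
    rw [abs_of_neg (by linarith)]; ring

include hα hmem in
lemma absD_succ_lt (k : ℕ) : |Dd α (k+1)| < |Dd α k| := by
  have h := D_succ hα hmem k
  have h1 := (aseq_props hα hmem (k+1)).2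
  have hD : Dd α k ≠ 0 := by
    intro h0
    have := D_sign hα hmem k
    rw [h0] at this; simp at this
  rw [h, abs_mul, abs_neg, abs_of_pos h1.1]
  have : 0 < |Dd α k| := abs_pos.mpr hD
  nlinarith [h1.2]

lemma detPQ (α : ℝ) : ∀ k, (cfP α (k+1) : ℤ) * cfQ α k - (cfP α k : ℤ) * cfQ α (k+1) = (-1)^k := by
  intro k
  induction k with
  | zero => simp [cfP, cfQ]
  | succ n ih =>
    have hQ : (cfQ α (n+2) : ℤ) = (cfA α (n+2) : ℤ) * cfQ α (n+1) + cfQ α n := by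
      simp [cfQ]
    have hP : (cfP α (n+2) : ℤ) = (cfA α (n+2) : ℤ) * cfP α (n+1) + cfP α n := by
      simp [cfP]
    rw [hP, hQ]
    have : (-1:ℤ)^(n+1) = -(-1)^n := by ring
    rw [this, ← ih]; ring

include hα hmem in
lemma cfQ_pos : ∀ k, 1 ≤ cfQ α k
  | 0 => le_refl 1
  | 1 => cfA_pos hα hmem 0
  | (k+2) => by
    have h1 := cfQ_pos (k+1)
    have h2 := cfA_pos hα hmem (k+1)
    calc 1 ≤ cfA α (k+2) * cfQ α (k+1) := Nat.one_le_iff_ne_zero.mpr (by positivity)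
      _ ≤ _ := Nat.le_add_right _ _

include hα hmem in
lemma cfQ_mono (k : ℕ) : cfQ α k ≤ cfQ α (k+1) := by
  cases k with
  | zero => exact cfQ_pos hα hmem 1
  | succ n =>
    show cfQ α (n+1) ≤ cfQ α (n+2)
    have h2 := cfA_pos hα hmem (n+1)
    calc cfQ α (n+1) = 1 * cfQ α (n+1) := (one_mul _).symm
      _ ≤ cfA α (n+2) * cfQ α (n+1) := Nat.mul_le_mul_right _ h2
      _ ≤ _ := Nat.le_add_right _ _

include hα hmem in
lemma cfQ_ge : ∀ k, k ≤ cfQ α (k+1) := by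
  intro k
  induction k with
  | zero => exact Nat.zero_le _
  | succ n ih =>
    have h1 := cfQ_pos hα hmem n
    have h2 := cfA_pos hα hmem (n+1)
    calc n + 1 ≤ cfQ α (n+1) + cfQ α n := by omega
      _ ≤ cfA α (n+2) * cfQ α (n+1) + cfQ α n := by
          exact Nat.add_le_add_right (Nat.le_mul_of_pos_left _ h2) _
      _ = cfQ α (n+2) := rfl

include hα hmem in
lemma exists_qk (m : ℕ) (hm : 1 ≤ m) : ∃ k, cfQ α k ≤ m ∧ m < cfQ α (k+1) := by
  have hex : ∃ k, m < cfQ α (k+1) := ⟨m+1, lt_of_lt_of_le (Nat.lt_succ_self m) (cfQ_ge hα hmem (m+1))⟩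
  classical
  let k := Nat.find hex
  refine ⟨k, ?_, Nat.find_spec hex⟩
  rcases Nat.eq_zero_or_pos k with h0 | hpos
  · rw [h0]; exact hm
  · obtain ⟨j, hj⟩ := Nat.exists_eq_succ_of_ne_zero (Nat.pos_iff_ne_zero.mp hpos)
    have hmin := Nat.find_min hex (m := j) (by omega)
    have : cfQ α k = cfQ α (j+1) := by rw [hj]
    omega

include hα hmem in
lemma one_eq (k : ℕ) : |Dd α k| * cfQ α (k+1) + |Dd α (k+1)| * cfQ α k = 1 := by
  have hdet := detPQ α k
  have hD : Dd α k * cfQ α (k+1) - Dd α (k+1) * cfQ α k = (-1:ℝ)^k := by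
    have : ((cfP α (k+1) : ℤ) * cfQ α k - (cfP α k : ℤ) * cfQ α (k+1) : ℤ) = ((-1:ℤ))^k := hdet
    have hcast : ((cfP α (k+1) : ℝ) * cfQ α k - (cfP α k : ℝ) * cfQ α (k+1)) = ((-1:ℝ))^k := by
      exact_mod_cast this
    simp only [Dd]
    nlinarith [hcast]
  have h1 := absD_eq hα hmem k
  have h2 := absD_eq hα hmem (k+1)
  have hpow : (-1:ℝ)^(k+1) = -(-1:ℝ)^k := by ring
  rw [h1, h2, hpow]
  rcases Nat.even_or_odd k with he | ho
  · rw [he.neg_one_pow] at *; linarith [hD]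
  · rw [ho.neg_one_pow] at *; linarith [hD]

include hα hmem in
lemma D_lb (k : ℕ) : 1 / (2 * (cfQ α (k+1) : ℝ)) ≤ |Dd α k| := by
  have h1 := one_eq hα hmem k
  have h2 := (absD_succ_lt hα hmem k).le
  have h3 : (cfQ α k : ℝ) ≤ cfQ α (k+1) := by exact_mod_cast cfQ_mono hα hmem k
  have h4 : (1:ℝ) ≤ cfQ α (k+1) := by exact_mod_cast cfQ_pos hα hmem (k+1)
  have h5 : (0:ℝ) ≤ cfQ α k := by positivity
  have key : 1 ≤ |Dd α k| * (2 * (cfQ α (k+1) : ℝ)) := by nlinarith [abs_nonneg (Dd α (k+1))]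
  rw [div_le_iff₀ (by linarith)]
  linarith


end CF

lemma best_core1 (α : ℝ) (p0 p1 q0 q1 m n : ℤ)
    (hdet : p1 * q0 - p0 * q1 = 1)
    (hs : 0 ≤ (q0:ℝ) * α - p0) (hs1 : (q1:ℝ) * α - p1 ≤ 0)
    (hq0 : 1 ≤ q0) (hm1 : 1 ≤ m) (hm2 : m < q1) :
    (q0:ℝ) * α - p0 ≤ |(m:ℝ) * α - n| := by
  set x : ℤ := p1 * m - q1 * n with hxdef
  set y : ℤ := q0 * n - p0 * m with hydef
  have hm' : m = x * q0 + y * q1 := by rw [hxdef, hydef]; linear_combination (-m) * hdet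
  have hn' : n = x * p0 + y * p1 := by rw [hxdef, hydef]; linear_combination (-n) * hdet
  have hq1 : 1 ≤ q1 := by omega
  have hxne : x ≠ 0 := by
    intro h0
    rw [h0, zero_mul, zero_add] at hm'
    rcases le_or_gt y 0 with hy | hy
    · nlinarith
    · nlinarith
  have hmr : (m:ℝ) = (x:ℝ) * q0 + (y:ℝ) * q1 := by exact_mod_cast hm'
  have hnr : (n:ℝ) = (x:ℝ) * p0 + (y:ℝ) * p1 := by exact_mod_cast hn'
  have hcomb : (m:ℝ) * α - n = (x:ℝ) * ((q0:ℝ) * α - p0) + (y:ℝ) * ((q1:ℝ) * α - p1) := by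
    rw [hmr, hnr]; ring
  rcases eq_or_ne y 0 with hy0 | hyne
  · rw [hcomb, hy0]
    push_cast
    rw [zero_mul, add_zero, abs_mul, abs_of_nonneg hs]
    have : (1:ℝ) ≤ |(x:ℝ)| := by exact_mod_cast Int.one_le_abs hxne
    nlinarith
  · rcases lt_or_gt_of_ne hxne with hx | hx
    · have hy : 0 < y := by
        rcases lt_or_gt_of_ne hyne with hy | hy
        · exfalso; nlinarith
        · exact hy
      have hxr : (x:ℝ) ≤ -1 := by exact_mod_cast (by omega : x ≤ -1)
      have hyr : (1:ℝ) ≤ (y:ℝ) := by exact_mod_cast hy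
      rw [hcomb, abs_of_nonpos (by nlinarith)]
      nlinarith
    · have hy : y < 0 := by
        rcases lt_or_gt_of_ne hyne with hy | hy
        · exact hy
        · exfalso; nlinarith
      have hxr : (1:ℝ) ≤ (x:ℝ) := by exact_mod_cast hx
      have hyr : (y:ℝ) ≤ -1 := by exact_mod_cast (by omega : y ≤ -1)
      rw [hcomb, abs_of_nonneg (by nlinarith)]
      nlinarith

section CF2
variable {α : ℝ} (hα : Irrational α) (hmem : α ∈ Set.Ico (0:ℝ) 1)

include hα hmem in
lemma best_approx (k : ℕ) (m n : ℤ) (hm1 : 1 ≤ m) (hm2 : m < (cfQ α (k+1) : ℤ)) :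
    |Dd α k| ≤ |(m : ℝ) * α - n| := by
  have hdet := detPQ α k
  have hq0 : (1:ℤ) ≤ (cfQ α k : ℤ) := by exact_mod_cast cfQ_pos hα hmem k
  have hsgn := D_sign hα hmem k
  have hsgn1 := D_sign hα hmem (k+1)
  have hDk : Dd α k = ((cfQ α k : ℤ) : ℝ) * α - ((cfP α k : ℤ) : ℝ) := by
    simp only [Dd]; push_cast; ring
  have hDk1 : Dd α (k+1) = ((cfQ α (k+1) : ℤ) : ℝ) * α - ((cfP α (k+1) : ℤ) : ℝ) := by
    simp only [Dd]; push_cast; ring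
  rcases Nat.even_or_odd k with he | ho
  · have h1 : 0 < Dd α k := by rw [he.neg_one_pow] at hsgn; linarith
    have h2 : Dd α (k+1) < 0 := by
      rw [(Even.add_one he).neg_one_pow] at hsgn1; linarith
    have hdet1 : (cfP α (k+1) : ℤ) * cfQ α k - (cfP α k : ℤ) * cfQ α (k+1) = 1 := by
      rw [hdet, he.neg_one_pow]
    have := best_core1 α (cfP α k) (cfP α (k+1)) (cfQ α k) (cfQ α (k+1)) m n hdet1
      (by rw [← hDk]; linarith) (by rw [← hDk1]; linarith) hq0 hm1 hm2
    rw [abs_of_pos h1]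
    rw [hDk]
    exact this
  · have h1 : Dd α k < 0 := by rw [ho.neg_one_pow] at hsgn; linarith
    have h2 : 0 < Dd α (k+1) := by
      rw [(Odd.add_one ho).neg_one_pow] at hsgn1; linarith
    have hdet1 : (-(cfP α (k+1) : ℤ)) * cfQ α k - (-(cfP α k : ℤ)) * cfQ α (k+1) = 1 := by
      rw [ho.neg_one_pow] at hdet; linarith
    have := best_core1 (-α) (-(cfP α k : ℤ)) (-(cfP α (k+1) : ℤ)) (cfQ α k) (cfQ α (k+1)) m (-n) hdet1
      (by push_cast; push_cast at hDk; nlinarith [hDk]) (by push_cast; push_cast at hDk1; nlinarith [hDk1]) hq0 hm1 hm2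
    rw [abs_of_neg h1]
    have heq : |(m:ℝ) * (-α) - ((-n : ℤ) : ℝ)| = |(m:ℝ) * α - n| := by
      push_cast
      rw [show (m:ℝ) * (-α) - (-n) = -((m:ℝ) * α - n) by ring, abs_neg]
    rw [heq] at this
    calc -Dd α k = ((cfQ α k : ℤ):ℝ) * (-α) - ((-(cfP α k : ℤ) : ℤ):ℝ) := by
          rw [hDk]; push_cast; ring
      _ ≤ _ := this

include hα hmem in
lemma cfQ_succ_le {B : ℕ} (hB : ∀ k : ℕ, 1 ≤ k → cfA α k ≤ B) (k : ℕ) :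
    cfQ α (k+1) ≤ (B+1) * cfQ α k := by
  cases k with
  | zero =>
    show cfA α 1 ≤ (B+1) * 1
    have := hB 1 le_rfl
    omega
  | succ n =>
    show cfA α (n+2) * cfQ α (n+1) + cfQ α n ≤ (B+1) * cfQ α (n+1)
    have h1 := hB (n+2) (by omega)
    have h2 := cfQ_mono hα hmem n
    have h3 := cfQ_pos hα hmem n
    nlinarith [Nat.mul_le_mul_right (cfQ α (n+1)) h1]

include hα hmem in
lemma badly {B : ℕ} (hB : ∀ k : ℕ, 1 ≤ k → cfA α k ≤ B) (m : ℕ) (hm : 1 ≤ m) (n : ℤ) :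
    1 / (2 * (B+1) * m) ≤ |(m:ℝ) * α - n| := by
  obtain ⟨k, hk1, hk2⟩ := exists_qk hα hmem m hm
  have hq1 : (m:ℤ) < (cfQ α (k+1) : ℤ) := by exact_mod_cast hk2
  have hbest := best_approx hα hmem k (m:ℤ) n (by exact_mod_cast hm) hq1
  have hlb := D_lb hα hmem k
  have hqle : cfQ α (k+1) ≤ (B+1) * cfQ α k := cfQ_succ_le hα hmem hB k
  have hc : (cfQ α (k+1) : ℝ) ≤ (B+1) * m := by
    calc (cfQ α (k+1) : ℝ) ≤ ((B+1) * cfQ α k : ℕ) := by exact_mod_cast hqle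
      _ ≤ ((B+1) * m : ℕ) := by exact_mod_cast Nat.mul_le_mul_left _ hk1
      _ = (B+1) * m := by push_cast; ring
  have hqpos : (0:ℝ) < cfQ α (k+1) := by exact_mod_cast cfQ_pos hα hmem (k+1)
  have hmpos : (0:ℝ) < m := by exact_mod_cast hm
  have h2 : 1 / (2 * ((B:ℝ)+1) * m) ≤ 1 / (2 * (cfQ α (k+1) : ℝ)) := by
    apply one_div_le_one_div_of_le (by positivity)
    linarith
  have hcast : (m:ℝ) * α - n = ((m:ℤ):ℝ) * α - n := by push_cast; ring
  rw [hcast]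
  calc 1 / (2 * ((B:ℝ)+1) * m) ≤ 1 / (2 * (cfQ α (k+1) : ℝ)) := h2
    _ ≤ |Dd α k| := hlb
    _ ≤ _ := hbest

end CF2

lemma log_succ_sub (n : ℕ) (hn : 1 ≤ n) :
    (1:ℝ)/(n+1) ≤ Real.log (n+1) - Real.log n := by
  have hn' : (0:ℝ) < n := by exact_mod_cast hn
  have h := Real.log_le_sub_one_of_pos (x := (n:ℝ)/(n+1)) (by positivity)
  rw [Real.log_div (by positivity) (by positivity)] at h
  have : (n:ℝ)/(n+1) - 1 = -(1/(n+1)) := by field_simp; ring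
  rw [this] at h
  linarith

lemma sub_log_succ (n : ℕ) (hn : 1 ≤ n) :
    (1:ℝ) / (n+1) ≥ Real.log (n+2) - Real.log (n+1) := by
  have h := Real.log_le_sub_one_of_pos (x := ((n:ℝ)+2)/(n+1)) (by positivity)
  rw [Real.log_div (by positivity) (by positivity)] at h
  have : ((n:ℝ)+2)/(n+1) - 1 = 1/(n+1) := by field_simp; ring
  rw [this] at h
  linarith

lemma harmonic_upper (J : ℕ) (hJ : 1 ≤ J) :
    ∑ j ∈ Finset.Icc 1 J, (1:ℝ)/j ≤ 1 + Real.log J := by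
  induction J with
  | zero => omega
  | succ n ih =>
    rcases Nat.eq_zero_or_pos n with rfl | hn
    · simp
    · rw [Finset.sum_Icc_succ_top (by omega)]
      have h2 := log_succ_sub n hn
      have := ih hn
      push_cast
      linarith

lemma harmonic_lower (K : ℕ) :
    Real.log (K+2) - Real.log 2 ≤ ∑ k ∈ Finset.Icc 1 K, (1:ℝ)/(k+1) := by
  induction K with
  | zero => simp
  | succ n ih =>
    rw [Finset.sum_Icc_succ_top (by omega)]
    have h := sub_log_succ (n+1) (by omega)
    push_cast at h ⊢
    have e : (n:ℝ)+1+1 = n+2 := by ring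
    rw [e] at h
    have e2 : (1:ℝ)/(↑n + 1 + 1) = 1/(↑n+2) := by rw [e]
    rw [e2]
    linarith

lemma telescope (f : ℕ → ℝ) (a b : ℕ) (h : a ≤ b) :
    ∑ k ∈ Finset.Icc a b, (f k - f (k+1)) = f a - f (b+1) := by
  have hicc : Finset.Icc a b = Finset.Ico a (b+1) := by
    ext x; simp [Nat.lt_succ_iff]
  rw [hicc, Finset.sum_Ico_eq_sum_range]
  have hb : b + 1 - a = (b - a) + 1 := by omega
  rw [hb]
  have h2 := Finset.sum_range_sub' (f := fun i => f (a + i)) (n := b - a + 1)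
  simp only [Nat.add_zero] at h2
  have h3 : ∀ k, f (a + k) - f (a + (k+1)) = f (a+k) - f (a+k+1) := by intro k; ring_nf
  simp only [h3] at h2
  rw [show a + (b - a + 1) = b + 1 from by omega] at h2
  exact h2

lemma count_small (α : ℝ) (M k : ℕ) (hM : 2 ≤ M) (hk : 1 ≤ k) (hkM : 2 * k ≤ M) :
    k ≤ ((Finset.Icc 1 M).filter (fun m : ℕ => nd (m * α) ≤ 2 * k / M)).card := by
  classical
  set n : ℕ := M / k with hn
  have hk0 : 0 < k := hk
  have hnk : n * k ≤ M := by rw [hn]; exact Nat.div_mul_le_self M k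
  have hn2 : 2 ≤ n := (Nat.le_div_iff_mul_le hk0).mpr (by omega)
  have hnR : (0:ℝ) < n := by exact_mod_cast (by omega : 0 < n)
  set g : ℕ → ℕ := fun m => ⌊Int.fract ((m:ℝ) * α) * n⌋₊ with hg
  have hmaps : ∀ m ∈ Finset.range (M+1), g m ∈ Finset.range n := by
    intro m _
    simp only [Finset.mem_range, hg]
    have h1 : Int.fract ((m:ℝ) * α) * n < n := by
      have := Int.fract_lt_one ((m:ℝ) * α)
      have := Int.fract_nonneg ((m:ℝ) * α)
      nlinarith
    exact (Nat.floor_lt (mul_nonneg (Int.fract_nonneg _) hnR.le)).mpr h1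
  have hcard : (Finset.range n).card * k < (Finset.range (M+1)).card := by
    simp only [Finset.card_range]
    omega
  obtain ⟨b, _, hT⟩ := Finset.exists_lt_card_fiber_of_mul_lt_card_of_maps_to hmaps hcard
  set T := (Finset.range (M+1)).filter (fun m => g m = b) with hTdef
  have hTne : T.Nonempty := Finset.card_pos.mp (by omega)
  obtain ⟨m0, hm0T, hm0min⟩ : ∃ m0 ∈ T, ∀ x ∈ T, m0 ≤ x :=
    ⟨T.min' hTne, T.min'_mem hTne, fun x hx => T.min'_le x hx⟩
  have hfract : ∀ m ∈ T, (b:ℝ) ≤ Int.fract ((m:ℝ) * α) * n ∧ Int.fract ((m:ℝ) * α) * n < b + 1 := by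
    intro m hm
    have hgm : g m = b := (Finset.mem_filter.mp hm).2
    rw [hg] at hgm
    simp only at hgm
    exact (Nat.floor_eq_iff (mul_nonneg (Int.fract_nonneg _) hnR.le)).mp hgm
  have hinj : ∀ m ∈ T.erase m0, m - m0 ∈ (Finset.Icc 1 M).filter (fun m : ℕ => nd (m * α) ≤ 2 * k / M) := by
    intro m hm
    have hmT : m ∈ T := Finset.mem_of_mem_erase hm
    have hne : m ≠ m0 := Finset.ne_of_mem_erase hm
    have hle : m0 ≤ m := hm0min m hmT
    have hlt : m0 < m := lt_of_le_of_ne hle (Ne.symm hne)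
    have hmM : m ≤ M := by
      have := (Finset.mem_filter.mp hmT).1
      simp only [Finset.mem_range] at this; omega
    refine Finset.mem_filter.mpr ⟨Finset.mem_Icc.mpr ⟨by omega, by omega⟩, ?_⟩
    have hcast : ((m - m0 : ℕ) : ℝ) = (m:ℝ) - m0 := by
      push_cast [Nat.cast_sub hle]; ring
    have hz : ((m - m0 : ℕ):ℝ) * α - ((⌊(m:ℝ)*α⌋ - ⌊(m0:ℝ)*α⌋ : ℤ) : ℝ)
        = Int.fract ((m:ℝ)*α) - Int.fract ((m0:ℝ)*α) := by
      rw [hcast]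
      simp only [Int.fract]
      push_cast
      ring
    have h1 := hfract m hmT
    have h2 := hfract m0 hm0T
    have hdiff : |Int.fract ((m:ℝ)*α) - Int.fract ((m0:ℝ)*α)| < 1 / n := by
      have hinv : (1:ℝ)/n * n = 1 := by field_simp
      rw [abs_lt]
      constructor
      · have key : Int.fract ((m0:ℝ)*α) * n < Int.fract ((m:ℝ)*α) * n + 1 := by
          linarith [h1.1, h2.2]
        rw [lt_sub_iff_add_lt, neg_add_lt_iff_lt_add]
        nlinarith [key, hinv, hnR]
      · have key : Int.fract ((m:ℝ)*α) * n < Int.fract ((m0:ℝ)*α) * n + 1 := by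
          linarith [h1.2, h2.1]
        rw [sub_lt_iff_lt_add]
        nlinarith [key, hinv, hnR]
    have hnd := nd_le_abs_sub_int (((m - m0 : ℕ):ℝ) * α) ((⌊(m:ℝ)*α⌋ - ⌊(m0:ℝ)*α⌋ : ℤ))
    rw [hz] at hnd
    have hfin : (1:ℝ)/n ≤ 2 * k / M := by
      have h1' : k * n + M % k = M := by rw [hn]; exact Nat.div_add_mod M k
      have h2' : M % k < k := Nat.mod_lt M hk0
      have hMkR : (M:ℝ) < (n:ℝ) * k + k := by
        have e1 : (k:ℝ) * n + ((M % k : ℕ):ℝ) = M := by exact_mod_cast h1'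
        have e2 : ((M % k : ℕ):ℝ) < k := by exact_mod_cast h2'
        nlinarith
      have hkR : (0:ℝ) < k := by exact_mod_cast hk0
      have hMR : (0:ℝ) < M := by positivity
      rw [div_le_div_iff₀ hnR hMR]
      have hn1 : (1:ℝ) ≤ n := by exact_mod_cast (by omega : 1 ≤ n)
      nlinarith
    have : nd (((m - m0 : ℕ):ℝ) * α) ≤ 2 * k / M :=
      le_trans hnd (le_trans hdiff.le hfin)
    exact this
  have hinjOn : Set.InjOn (fun m => m - m0) (T.erase m0) := by
    intro a ha b' hb' hab
    have ha' : m0 ≤ a := hm0min a (Finset.mem_of_mem_erase ha)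
    have hb'' : m0 ≤ b' := hm0min b' (Finset.mem_of_mem_erase hb')
    simp only at hab
    omega
  have hcard2 := Finset.card_le_card_of_injOn _ hinj hinjOn
  rw [Finset.card_erase_of_mem hm0T] at hcard2
  omega

lemma lower_bound (α : ℝ) (c0 : ℝ) (hc0 : 0 < c0)
    (hnd : ∀ m : ℕ, 1 ≤ m → ∀ z : ℤ, c0 / m ≤ |(m:ℝ) * α - z|)
    (M : ℕ) (hM : 2 ≤ M) :
    (M:ℝ)/2 * (Real.log M - 2*Real.log 2) ≤ S α M := by
  classical
  set K : ℕ := M / 2 with hK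
  have hK1 : 1 ≤ K := by omega
  have h2K : 2 * K ≤ M := by omega
  have hMR : (0:ℝ) < M := by positivity
  have hndpos : ∀ m : ℕ, 1 ≤ m → 0 < nd ((m:ℝ)*α) := by
    intro m hm
    have h := hnd m hm (round ((m:ℝ)*α))
    have : (0:ℝ) < c0 / m := by
      have : (0:ℝ) < m := by exact_mod_cast hm
      positivity
    calc (0:ℝ) < c0 / m := this
      _ ≤ _ := h
  set f : ℕ → ℝ := fun k => (M:ℝ)/(2*k) with hf
  set w : ℕ → ℝ := fun k => f k - f (k+1) with hw
  have hw0 : ∀ k : ℕ, 1 ≤ k → 0 ≤ w k := by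
    intro k hk
    have hkR : (1:ℝ) ≤ k := by exact_mod_cast hk
    simp only [hw, hf]
    have : (M:ℝ)/(2*(k+1)) ≤ (M:ℝ)/(2*k) := by
      apply div_le_div_of_nonneg_left hMR.le (by linarith)
      push_cast; linarith
    push_cast
    linarith
  have stepA : ∀ m ∈ Finset.Icc 1 M,
      (∑ k ∈ Finset.Icc 1 K, if nd ((m:ℝ)*α) ≤ 2*k/M then w k else 0) ≤ 1 / nd ((m:ℝ)*α) := by
    intro m hm
    obtain ⟨hm1, hm2⟩ := Finset.mem_Icc.mp hm
    have hpos := hndpos m hm1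
    rw [← Finset.sum_filter]
    set A := (Finset.Icc 1 K).filter (fun k : ℕ => nd ((m:ℝ)*α) ≤ 2*k/M) with hA
    rcases A.eq_empty_or_nonempty with hAe | hAne
    · rw [hAe, Finset.sum_empty]
      positivity
    · set k0 := A.min' hAne with hk0
      have hk0A : k0 ∈ A := A.min'_mem hAne
      obtain ⟨hk0Icc, hk0small⟩ := Finset.mem_filter.mp hk0A
      obtain ⟨hk01, hk0K⟩ := Finset.mem_Icc.mp hk0Icc
      have hsub : A ⊆ Finset.Icc k0 K := by
        intro x hx
        have h1 := A.min'_le x hx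
        have h2 := (Finset.mem_Icc.mp (Finset.mem_filter.mp hx).1).2
        exact Finset.mem_Icc.mpr ⟨h1, h2⟩
      have hb1 : ∑ k ∈ A, w k ≤ ∑ k ∈ Finset.Icc k0 K, w k := by
        apply Finset.sum_le_sum_of_subset_of_nonneg hsub
        intro x hx _
        exact hw0 x (le_trans hk01 (Finset.mem_Icc.mp hx).1)
      have hb2 : ∑ k ∈ Finset.Icc k0 K, w k = f k0 - f (K+1) := telescope f k0 K hk0K
      have hfK : 0 ≤ f (K+1) := by
        simp only [hf]; positivity
      have hfk0 : f k0 ≤ 1 / nd ((m:ℝ)*α) := by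
        simp only [hf]
        rw [div_le_div_iff₀ (by positivity : (0:ℝ) < 2*(k0:ℝ)) hpos]
        have hc : (2*(k0:ℝ)/M) * M = 2*k0 := by field_simp
        nlinarith [hk0small, hMR]
      linarith
  have hS : ∑ m ∈ Finset.Icc 1 M,
      (∑ k ∈ Finset.Icc 1 K, if nd ((m:ℝ)*α) ≤ 2*k/M then w k else 0) ≤ S α M := by
    apply Finset.sum_le_sum
    intro m hm
    exact stepA m hm
  rw [Finset.sum_comm] at hS
  have stepB : ∀ k ∈ Finset.Icc 1 K,
      (k:ℝ) * w k ≤ ∑ m ∈ Finset.Icc 1 M, (if nd ((m:ℝ)*α) ≤ 2*k/M then w k else 0) := by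
    intro k hk
    obtain ⟨hk1, hkK⟩ := Finset.mem_Icc.mp hk
    rw [← Finset.sum_filter, Finset.sum_const, nsmul_eq_mul]
    have hcount := count_small α M k hM hk1 (by omega)
    have hcountR : (k:ℝ) ≤ ((Finset.Icc 1 M).filter (fun m : ℕ => nd (m * α) ≤ 2 * k / M)).card := by
      exact_mod_cast hcount
    exact mul_le_mul_of_nonneg_right hcountR (hw0 k hk1)
  have hsum2 : ∑ k ∈ Finset.Icc 1 K, (k:ℝ) * w k ≤ S α M := by
    calc ∑ k ∈ Finset.Icc 1 K, (k:ℝ) * w k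
        ≤ ∑ k ∈ Finset.Icc 1 K, ∑ m ∈ Finset.Icc 1 M, (if nd ((m:ℝ)*α) ≤ 2*k/M then w k else 0) :=
          Finset.sum_le_sum stepB
      _ ≤ S α M := hS
  have hkw : ∀ k ∈ Finset.Icc 1 K, (M:ℝ)/2 * (1/((k:ℝ)+1)) ≤ (k:ℝ) * w k := by
    intro k hk
    obtain ⟨hk1, _⟩ := Finset.mem_Icc.mp hk
    have hkR : (1:ℝ) ≤ k := by exact_mod_cast hk1
    simp only [hw, hf]
    push_cast
    have : (k:ℝ) * ((M:ℝ)/(2*k) - (M:ℝ)/(2*(k+1))) - (M:ℝ)/2 * (1/((k:ℝ)+1)) = 0 := by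
      field_simp
      ring
    linarith [this]
  have hharm : (M:ℝ)/2 * (Real.log (K+2) - Real.log 2) ≤ ∑ k ∈ Finset.Icc 1 K, (k:ℝ) * w k := by
    calc (M:ℝ)/2 * (Real.log (K+2) - Real.log 2)
        ≤ (M:ℝ)/2 * ∑ k ∈ Finset.Icc 1 K, (1:ℝ)/(k+1) := by
          apply mul_le_mul_of_nonneg_left (harmonic_lower K) (by positivity)
      _ = ∑ k ∈ Finset.Icc 1 K, (M:ℝ)/2 * (1/((k:ℝ)+1)) := by
          rw [Finset.mul_sum]
      _ ≤ _ := Finset.sum_le_sum hkw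
  have hKlog : Real.log M - Real.log 2 ≤ Real.log (K+2) := by
    have h1 : (M:ℝ)/2 ≤ (K:ℝ)+2 := by
      have : 2 * K + 1 ≥ M := by omega
      have : (M:ℝ) ≤ 2*(K:ℝ)+1 := by exact_mod_cast this
      linarith
    calc Real.log M - Real.log 2 = Real.log ((M:ℝ)/2) := by
          rw [Real.log_div (by positivity) (by norm_num)]
      _ ≤ Real.log ((K:ℝ)+2) := Real.log_le_log (by positivity) h1
  have : (M:ℝ)/2 * (Real.log M - 2*Real.log 2) ≤ (M:ℝ)/2 * (Real.log (K+2) - Real.log 2) := by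
    apply mul_le_mul_of_nonneg_left _ (by positivity)
    linarith
  linarith

lemma card_le_one_band (s : Finset ℕ) (g : ℕ → ℝ) (δ lo : ℝ)
    (hsep : ∀ a ∈ s, ∀ b ∈ s, b < a → δ < |g a - g b|)
    (hmem : ∀ a ∈ s, lo ≤ g a ∧ g a ≤ lo + δ) : s.card ≤ 1 := by
  refine Finset.card_le_one.mpr ?_
  intro a ha b hb
  by_contra hne
  rcases Nat.lt_trichotomy a b with h | h | h
  · have h0 := hsep b hb a ha h
    have h1 := hmem a ha
    have h2 := hmem b hb
    have : |g b - g a| ≤ δ := abs_le.mpr ⟨by linarith, by linarith⟩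
    linarith
  · exact hne h
  · have h0 := hsep a ha b hb h
    have h1 := hmem a ha
    have h2 := hmem b hb
    have : |g a - g b| ≤ δ := abs_le.mpr ⟨by linarith, by linarith⟩
    linarith

lemma upper_bound (α : ℝ) (c0 : ℝ) (hc0 : 0 < c0) (hc1 : c0 ≤ 1/2)
    (hnd : ∀ m : ℕ, 1 ≤ m → ∀ z : ℤ, c0 / m ≤ |(m:ℝ) * α - z|)
    (M : ℕ) (hM : 2 ≤ M) :
    S α M ≤ (2*M/c0) * (1 + Real.log ((M:ℝ)/(2*c0))) := by
  classical
  have hMR : (2:ℝ) ≤ M := by exact_mod_cast hM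
  have hMpos : (0:ℝ) < M := by linarith
  set δ : ℝ := c0 / M with hδdef
  have hδ : 0 < δ := by positivity
  set F : ℕ → ℝ := fun m => (m:ℝ)*α - round ((m:ℝ)*α) with hF
  have hndF : ∀ m : ℕ, nd ((m:ℝ)*α) = |F m| := by intro m; rfl
  have hndlow : ∀ m : ℕ, 1 ≤ m → m ≤ M → δ ≤ nd ((m:ℝ)*α) := by
    intro m h1 h2
    have h3 := hnd m h1 (round ((m:ℝ)*α))
    have hmR : (1:ℝ) ≤ m := by exact_mod_cast h1
    have hmM : (m:ℝ) ≤ M := by exact_mod_cast h2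
    have : c0 / M ≤ c0 / m := div_le_div_of_nonneg_left hc0.le (by linarith) hmM
    exact le_trans this h3
  have hsep : ∀ a ∈ Finset.Icc 1 M, ∀ b ∈ Finset.Icc 1 M, b < a → δ < |F a - F b| := by
    intro a ha b hb hba
    obtain ⟨ha1, ha2⟩ := Finset.mem_Icc.mp ha
    obtain ⟨hb1, hb2⟩ := Finset.mem_Icc.mp hb
    have hd1 : 1 ≤ a - b := by omega
    have hdM : a - b < M := by omega
    have hcast : ((a - b : ℕ):ℝ) = (a:ℝ) - b := by
      push_cast [Nat.cast_sub hba.le]; ring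
    have hz : F a - F b = ((a-b:ℕ):ℝ) * α - ((round ((a:ℝ)*α) - round ((b:ℝ)*α) : ℤ):ℝ) := by
      simp only [hF]
      rw [hcast]
      push_cast
      ring
    have h3 := hnd (a-b) hd1 (round ((a:ℝ)*α) - round ((b:ℝ)*α))
    have hdMR : ((a-b:ℕ):ℝ) < M := by exact_mod_cast hdM
    have hdpos : (0:ℝ) < ((a-b:ℕ):ℝ) := by exact_mod_cast hd1
    have : δ < c0 / ((a-b:ℕ):ℝ) := by
      rw [hδdef]
      apply div_lt_div_of_pos_left hc0 hdpos hdMR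
    rw [hz]
    linarith [h3]
  set J : ℕ := ⌊(M:ℝ)/(2*c0)⌋₊ with hJdef
  have hJub : ((M:ℝ)/(2*c0)) ≥ 1 := by
    rw [ge_iff_le, le_div_iff₀ (by positivity)]
    linarith
  have hJ1 : 1 ≤ J := Nat.le_floor (by exact_mod_cast hJub)
  set jix : ℕ → ℕ := fun m => ⌊nd ((m:ℝ)*α)/δ⌋₊ with hjix
  have hmaps : ∀ m ∈ Finset.Icc 1 M, jix m ∈ Finset.Icc 1 J := by
    intro m hm
    obtain ⟨h1, h2⟩ := Finset.mem_Icc.mp hm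
    have hlow := hndlow m h1 h2
    refine Finset.mem_Icc.mpr ⟨?_, ?_⟩
    · apply Nat.le_floor
      rw [Nat.cast_one, le_div_iff₀ hδ]
      linarith
    · apply Nat.floor_le_floor
      have hup := nd_le_half ((m:ℝ)*α)
      rw [div_le_iff₀ hδ, hδdef]
      have : (M:ℝ)/(2*c0) * (c0/M) = 1/2 := by field_simp
      rw [this]
      exact hup
  have hfloor : ∀ m : ℕ, ∀ j : ℕ, jix m = j → (j:ℝ) * δ ≤ nd ((m:ℝ)*α) ∧ nd ((m:ℝ)*α) ≤ (j+1) * δ := by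
    intro m j hj
    rw [hjix] at hj
    simp only at hj
    have hnn : (0:ℝ) ≤ nd ((m:ℝ)*α)/δ := div_nonneg (abs_nonneg _) hδ.le
    have := (Nat.floor_eq_iff hnn).mp hj
    constructor
    · rw [← le_div_iff₀ hδ]; exact this.1
    · rw [← div_le_iff₀ hδ]; push_cast; linarith [this.2]
  have hfiber : ∀ j ∈ Finset.Icc 1 J, ((Finset.Icc 1 M).filter (fun m => jix m = j)).card ≤ 2 := by
    intro j hj
    set T := (Finset.Icc 1 M).filter (fun m => jix m = j) with hT
    have hsplit := Finset.card_filter_add_card_filter_not (s := T) (p := fun m => 0 ≤ F m)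
    have hTsub : T ⊆ Finset.Icc 1 M := Finset.filter_subset _ _
    have hpos1 : (T.filter (fun m => 0 ≤ F m)).card ≤ 1 := by
      apply card_le_one_band _ F δ ((j:ℝ)*δ)
      · intro a ha b hb hba
        exact hsep a (hTsub (Finset.mem_of_mem_filter a ha)) b (hTsub (Finset.mem_of_mem_filter b hb)) hba
      · intro a ha
        have haT := Finset.mem_of_mem_filter a ha
        have hsgn : 0 ≤ F a := (Finset.mem_filter.mp ha).2
        have hjx : jix a = j := (Finset.mem_filter.mp haT).2
        have hfl := hfloor a j hjx
        rw [hndF, abs_of_nonneg hsgn] at hfl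
        constructor
        · exact hfl.1
        · have : ((j:ℝ)+1) * δ = (j:ℝ)*δ + δ := by ring
          linarith [hfl.2, this]
    have hpos2 : (T.filter (fun m => ¬ (0 ≤ F m))).card ≤ 1 := by
      apply card_le_one_band _ F δ (-(((j:ℝ)+1)*δ))
      · intro a ha b hb hba
        exact hsep a (hTsub (Finset.mem_of_mem_filter a ha)) b (hTsub (Finset.mem_of_mem_filter b hb)) hba
      · intro a ha
        have haT := Finset.mem_of_mem_filter a ha
        have hsgn : F a < 0 := by
          have := (Finset.mem_filter.mp ha).2
          linarith [not_le.mp this]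
        have hjx : jix a = j := (Finset.mem_filter.mp haT).2
        have hfl := hfloor a j hjx
        rw [hndF, abs_of_neg hsgn] at hfl
        constructor
        · linarith [hfl.2]
        · have : -(((j:ℝ)+1)*δ) + δ = -((j:ℝ)*δ) - δ + δ + δ - δ := by ring
          nlinarith [hfl.1, hδ]
    omega
  -- assemble
  have hsplitS : S α M = ∑ j ∈ Finset.Icc 1 J, ∑ m ∈ (Finset.Icc 1 M).filter (fun m => jix m = j), 1 / nd ((m:ℝ)*α) := by
    rw [S]
    exact (Finset.sum_fiberwise_of_maps_to hmaps _).symm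
  have hinner : ∀ j ∈ Finset.Icc 1 J,
      ∑ m ∈ (Finset.Icc 1 M).filter (fun m => jix m = j), 1 / nd ((m:ℝ)*α) ≤ 2 * (1/((j:ℝ)*δ)) := by
    intro j hj
    obtain ⟨hj1, _⟩ := Finset.mem_Icc.mp hj
    have hjR : (1:ℝ) ≤ j := by exact_mod_cast hj1
    have hjδ : 0 < (j:ℝ)*δ := by positivity
    have hterm : ∀ m ∈ (Finset.Icc 1 M).filter (fun m => jix m = j), 1 / nd ((m:ℝ)*α) ≤ 1/((j:ℝ)*δ) := by
      intro m hm
      have hjx : jix m = j := (Finset.mem_filter.mp hm).2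
      have hfl := (hfloor m j hjx).1
      have h1 := Finset.mem_Icc.mp (Finset.mem_of_mem_filter m hm)
      have hpos : 0 < nd ((m:ℝ)*α) := lt_of_lt_of_le (by positivity) (hndlow m h1.1 h1.2)
      apply one_div_le_one_div_of_le hjδ hfl
    calc ∑ m ∈ (Finset.Icc 1 M).filter (fun m => jix m = j), 1 / nd ((m:ℝ)*α)
        ≤ ((Finset.Icc 1 M).filter (fun m => jix m = j)).card • (1/((j:ℝ)*δ)) :=
          Finset.sum_le_card_nsmul _ _ _ hterm
      _ ≤ 2 * (1/((j:ℝ)*δ)) := by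
          rw [nsmul_eq_mul]
          apply mul_le_mul_of_nonneg_right _ (by positivity)
          exact_mod_cast hfiber j hj
  have htotal : S α M ≤ ∑ j ∈ Finset.Icc 1 J, 2 * (1/((j:ℝ)*δ)) := by
    rw [hsplitS]
    exact Finset.sum_le_sum hinner
  have heq : ∑ j ∈ Finset.Icc 1 J, 2 * (1/((j:ℝ)*δ)) = (2/δ) * ∑ j ∈ Finset.Icc 1 J, (1:ℝ)/j := by
    rw [Finset.mul_sum]
    apply Finset.sum_congr rfl
    intro j hj
    have hj1 := (Finset.mem_Icc.mp hj).1
    have hjR : (0:ℝ) < j := by exact_mod_cast hj1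
    field_simp
  have hharm := harmonic_upper J hJ1
  have hJle : Real.log J ≤ Real.log ((M:ℝ)/(2*c0)) := by
    apply Real.log_le_log (by exact_mod_cast hJ1)
    exact Nat.floor_le (by positivity)
  have h2δ : 2/δ = 2*M/c0 := by
    rw [hδdef]; field_simp
  calc S α M ≤ ∑ j ∈ Finset.Icc 1 J, 2 * (1/((j:ℝ)*δ)) := htotal
    _ = (2/δ) * ∑ j ∈ Finset.Icc 1 J, (1:ℝ)/j := heq
    _ ≤ (2/δ) * (1 + Real.log J) := by
        apply mul_le_mul_of_nonneg_left hharm (by positivity)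
    _ ≤ (2/δ) * (1 + Real.log ((M:ℝ)/(2*c0))) := by
        apply mul_le_mul_of_nonneg_left (by linarith) (by positivity)
    _ = (2*M/c0) * (1 + Real.log ((M:ℝ)/(2*c0))) := by rw [h2δ]


theorem bounded_type_growth (α : ℝ) (hα : Irrational α) (hmem : α ∈ Set.Ico (0:ℝ) 1)
    (hbdd : ∃ B : ℕ, ∀ k : ℕ, 1 ≤ k → cfA α k ≤ B) :
    ∃ c C : ℝ, 0 < c ∧ 0 < C ∧ ∀ M : ℕ, 2 ≤ M →
      c * M * Real.log M ≤ S α M ∧ S α M ≤ C * M * Real.log M := by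
  classical
  obtain ⟨B, hB⟩ := hbdd
  have hB1 : 1 ≤ B := le_trans (cfA_pos hα hmem 0) (hB 1 le_rfl)
  set c0 : ℝ := 1/(2*((B:ℝ)+1)) with hc0def
  have hBR : (1:ℝ) ≤ B := by exact_mod_cast hB1
  have hc0 : 0 < c0 := by rw [hc0def]; positivity
  have hc1 : c0 ≤ 1/2 := by
    rw [hc0def]
    rw [div_le_div_iff₀ (by positivity) (by norm_num)]
    linarith
  have hnd : ∀ m : ℕ, 1 ≤ m → ∀ z : ℤ, c0 / m ≤ |(m:ℝ) * α - z| := by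
    intro m hm z
    have h := badly hα hmem hB m hm z
    have hmR : (0:ℝ) < m := by exact_mod_cast hm
    have : c0 / m = 1 / (2 * ((B:ℝ)+1) * m) := by
      rw [hc0def]; field_simp
    rw [this]
    exact h
  have hinv : 1/(2*c0) = (B:ℝ)+1 := by
    rw [hc0def]; field_simp
  set L : ℝ := Real.log ((B:ℝ)+1) with hLdef
  have hL0 : 0 ≤ L := by
    rw [hLdef]
    apply Real.log_nonneg
    linarith
  have hlog2 : (0:ℝ) < Real.log 2 := Real.log_pos (by norm_num)
  set C : ℝ := (2/c0) * (1/Real.log 2 + 1 + L/Real.log 2) with hCdef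
  have hCpos : 0 < C := by
    rw [hCdef]
    have h1 : 0 < 1/Real.log 2 := by positivity
    have h2 : 0 ≤ L/Real.log 2 := by positivity
    have : 0 < 2/c0 := by positivity
    nlinarith
  refine ⟨1/4, C, by norm_num, hCpos, ?_⟩
  intro M hM
  have hMR : (2:ℝ) ≤ M := by exact_mod_cast hM
  have hMpos : (0:ℝ) < M := by linarith
  have hlogM : Real.log 2 ≤ Real.log M := Real.log_le_log (by norm_num) hMR
  have hlogMpos : 0 < Real.log M := lt_of_lt_of_le hlog2 hlogM
  constructor
  · -- lower bound
    rcases le_or_gt (M:ℝ) 16 with h16 | h16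
    · -- small M : use S ≥ 2M
      have hS2M : 2 * (M:ℝ) ≤ S α M := by
        have hterm : ∀ m ∈ Finset.Icc 1 M, (2:ℝ) ≤ 1 / nd ((m:ℝ) * α) := by
          intro m hm
          obtain ⟨h1, h2⟩ := Finset.mem_Icc.mp hm
          have hpos : 0 < nd ((m:ℝ)*α) := by
            have h := hnd m h1 (round ((m:ℝ)*α))
            have hmR : (0:ℝ) < m := by exact_mod_cast h1
            calc (0:ℝ) < c0/m := by positivity
              _ ≤ _ := h
          have hhalf := nd_le_half ((m:ℝ)*α)
          rw [le_div_iff₀ hpos]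
          linarith
        calc 2 * (M:ℝ) = (Finset.Icc 1 M).card • (2:ℝ) := by
              rw [Nat.card_Icc]
              simp [nsmul_eq_mul]
              ring
          _ ≤ _ := Finset.card_nsmul_le_sum _ _ _ hterm
      have hlog6 : Real.log M ≤ 6 := by
        have hsq : Real.sqrt M ≤ 4 := by
          rw [show (4:ℝ) = Real.sqrt 16 by
            rw [show (16:ℝ) = 4^2 by norm_num, Real.sqrt_sq (by norm_num)]]
          exact Real.sqrt_le_sqrt h16
        have hsqpos : 0 < Real.sqrt M := Real.sqrt_pos.mpr hMpos
        have h1 : Real.log (Real.sqrt M) ≤ Real.sqrt M - 1 :=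
          Real.log_le_sub_one_of_pos hsqpos
        have h2 : Real.log (Real.sqrt M) = Real.log M / 2 := Real.log_sqrt hMpos.le
        linarith
      nlinarith
    · -- large M : use lower_bound
      have hlb := lower_bound α c0 hc0 hnd M hM
      have h16' : Real.log 16 ≤ Real.log M := Real.log_le_log (by norm_num) h16.le
      have hlog16 : Real.log 16 = 4 * Real.log 2 := by
        rw [show (16:ℝ) = 2^4 by norm_num, Real.log_pow]
        push_cast; ring
      nlinarith
  · -- upper bound
    have hub := upper_bound α c0 hc0 hc1 hnd M hM
    have hsplit : Real.log ((M:ℝ)/(2*c0)) = Real.log M + L := by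
      rw [show (M:ℝ)/(2*c0) = M * (1/(2*c0)) by ring, Real.log_mul (by positivity) (by rw [hinv]; positivity), hinv, hLdef]
    rw [hsplit, show 1 + (Real.log M + L) = 1 + Real.log M + L from by ring] at hub
    have hkey : 1 + Real.log M + L ≤ (1/Real.log 2 + 1 + L/Real.log 2) * Real.log M := by
      have e1 : 0 ≤ (1/Real.log 2) * (Real.log M - Real.log 2) :=
        mul_nonneg (by positivity) (by linarith)
      have e2 : 0 ≤ (L/Real.log 2) * (Real.log M - Real.log 2) :=
        mul_nonneg (by positivity) (by linarith)
      have e3 : L/Real.log 2 * Real.log 2 = L := by field_simp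
      have e4 : 1/Real.log 2 * Real.log 2 = 1 := by field_simp
      nlinarith [e1, e2, e3, e4]
    calc S α M ≤ (2*M/c0) * (1 + Real.log M + L) := hub
      _ ≤ (2*M/c0) * ((1/Real.log 2 + 1 + L/Real.log 2) * Real.log M) := by
          apply mul_le_mul_of_nonneg_left hkey (by positivity)
      _ = C * M * Real.log M := by rw [hCdef]; ring
end

section
/- Let φ: ℕ → (0,∞). If Σ_k 1/φ(k) < ∞, then for Lebesgue-almost every α ∈ (0,1), a_k(α) ≤ φ(k) for all sufficiently large k, where a_k(α) is the k-th continued fraction partial quotient. -/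
open Filter MeasureTheory Real

lemma gaussMap_iter_mem {x : ℝ} (hx : x ∈ Set.Ioo (0:ℝ) 1) (n : ℕ) :
    gaussMap^[n] x ∈ Set.Ico (0:ℝ) 1 := by
  cases n with
  | zero => exact ⟨hx.1.le, hx.2⟩
  | succ n =>
    rw [Function.iterate_succ_apply']
    exact ⟨Int.fract_nonneg _, Int.fract_lt_one _⟩

/-- Elementary inequality: `b - a ≤ 2 (log (1+b) - log (1+a))` for `0 ≤ a ≤ b ≤ 1`. -/
lemma sub_le_two_mul_log {a b : ℝ} (ha : 0 ≤ a) (hab : a ≤ b) (hb : b ≤ 1) :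
    b - a ≤ 2 * (Real.log (1 + b) - Real.log (1 + a)) := by
  have hb0 : (0:ℝ) < 1 + b := by linarith
  have ha0 : (0:ℝ) < 1 + a := by linarith
  have h := Real.log_le_sub_one_of_pos (show (0:ℝ) < (1+a)/(1+b) by positivity)
  rw [Real.log_div ha0.ne' hb0.ne'] at h
  have h2 : (1+a)/(1+b) - 1 = (a - b)/(1+b) := by field_simp; ring
  rw [h2] at h
  have h3 : (a - b)/(1+b) ≤ (a - b)/2 := by
    rw [div_le_div_iff₀ hb0 (by norm_num)]
    nlinarith
  linarith

/-- Key Gauss–Kuzmin type bound, proved by induction with telescoping over branches. -/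
lemma gauss_kuzmin_bound : ∀ n : ℕ, ∀ a b : ℝ, 0 ≤ a → a ≤ b → b ≤ 1 →
    volume (Set.Ioo (0:ℝ) 1 ∩ gaussMap^[n] ⁻¹' Set.Icc a b)
      ≤ ENNReal.ofReal (2 * (Real.log (1 + b) - Real.log (1 + a))) := by
  intro n
  induction n with
  | zero =>
    intro a b ha hab hb
    calc volume (Set.Ioo (0:ℝ) 1 ∩ gaussMap^[0] ⁻¹' Set.Icc a b)
        ≤ volume (Set.Icc a b) := by
          apply measure_mono
          intro x hx
          simpa using hx.2
      _ = ENNReal.ofReal (b - a) := by rw [Real.volume_Icc]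
      _ ≤ _ := ENNReal.ofReal_le_ofReal (sub_le_two_mul_log ha hab hb)
  | succ n ih =>
    intro a b ha hab hb
    -- branch intervals
    set A : ℕ → Set ℝ := fun m =>
      Set.Ioo (0:ℝ) 1 ∩ gaussMap^[n] ⁻¹' Set.Icc (1/((m:ℝ)+1+b)) (1/((m:ℝ)+1+a)) with hA
    have hsub : Set.Ioo (0:ℝ) 1 ∩ gaussMap^[n+1] ⁻¹' Set.Icc a b ⊆
        (Set.Ioo (0:ℝ) 1 ∩ gaussMap^[n] ⁻¹' Set.Icc 0 0) ∪ ⋃ m : ℕ, A m := by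
      rintro x ⟨hx, hTx⟩
      rw [Set.mem_preimage, Function.iterate_succ_apply'] at hTx
      set y := gaussMap^[n] x with hy
      have hy01 : y ∈ Set.Ico (0:ℝ) 1 := gaussMap_iter_mem hx n
      rcases eq_or_lt_of_le hy01.1 with h0 | h0
      · left
        refine ⟨hx, ?_⟩
        rw [Set.mem_preimage, ← hy, ← h0]
        exact Set.mem_Icc.mpr ⟨le_rfl, le_rfl⟩
      · right
        have hyinv : (1:ℝ) < y⁻¹ := (one_lt_inv₀ h0).mpr hy01.2
        have hK1 : (1:ℤ) ≤ ⌊y⁻¹⌋ := by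
          exact_mod_cast Int.le_floor.mpr (by exact_mod_cast hyinv.le)
        set m : ℕ := (⌊y⁻¹⌋ - 1).toNat with hm
        have hz : ((m:ℤ)) = ⌊y⁻¹⌋ - 1 := by
          rw [hm]; exact Int.toNat_of_nonneg (by omega)
        have hKm : (⌊y⁻¹⌋ : ℝ) = (m:ℝ) + 1 := by
          have : ⌊y⁻¹⌋ = (m:ℤ) + 1 := by omega
          rw [this]; push_cast; ring
        have hfr : Int.fract y⁻¹ = y⁻¹ - ((m:ℝ)+1) := by
          rw [Int.fract, hKm]
        have hTy : gaussMap y ∈ Set.Icc a b := hTx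
        rw [Set.mem_Icc] at hTy
        unfold gaussMap at hTy
        rw [hfr] at hTy
        have hlo : (m:ℝ)+1+a ≤ y⁻¹ := by linarith [hTy.1]
        have hhi : y⁻¹ ≤ (m:ℝ)+1+b := by linarith [hTy.2]
        have hm0 : (0:ℝ) ≤ (m:ℝ) := Nat.cast_nonneg m
        have hma : (0:ℝ) < (m:ℝ)+1+a := by linarith
        have hmb : (0:ℝ) < (m:ℝ)+1+b := by linarith
        refine Set.mem_iUnion.mpr ⟨m, hx, ?_⟩
        rw [Set.mem_preimage, ← hy, Set.mem_Icc]
        constructor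
        · rw [div_le_iff₀ hmb, ← div_le_iff₀' h0, div_eq_inv_mul, mul_one]
          exact hhi
        · rw [le_div_iff₀ hma, ← le_div_iff₀' h0, div_eq_inv_mul, mul_one]
          exact hlo
    have hzero : volume (Set.Ioo (0:ℝ) 1 ∩ gaussMap^[n] ⁻¹' Set.Icc (0:ℝ) 0) = 0 := by
      have := ih 0 0 le_rfl le_rfl zero_le_one
      simpa using this
    -- telescoping sum
    set F : ℕ → ℝ := fun m => 2 * (Real.log ((m:ℝ)+1+b) - Real.log ((m:ℝ)+1+a)) with hF
    have hc : ∀ m : ℕ,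
        2 * (Real.log (1 + 1/((m:ℝ)+1+a)) - Real.log (1 + 1/((m:ℝ)+1+b)))
          = F m - F (m+1) := by
      intro m
      have hm0 : (0:ℝ) ≤ (m:ℝ) := Nat.cast_nonneg m
      have hma : (0:ℝ) < (m:ℝ)+1+a := by linarith
      have hmb : (0:ℝ) < (m:ℝ)+1+b := by linarith
      have e1 : (1:ℝ) + 1/((m:ℝ)+1+a) = ((m:ℝ)+2+a)/((m:ℝ)+1+a) := by field_simp; ring
      have e2 : (1:ℝ) + 1/((m:ℝ)+1+b) = ((m:ℝ)+2+b)/((m:ℝ)+1+b) := by field_simp; ring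
      rw [e1, e2, Real.log_div (by linarith) hma.ne', Real.log_div (by linarith) hmb.ne']
      simp only [hF]
      push_cast
      ring_nf
    have hcnn : ∀ m : ℕ, 0 ≤ F m - F (m+1) := by
      intro m
      rw [← hc m]
      have hm0 : (0:ℝ) ≤ (m:ℝ) := Nat.cast_nonneg m
      have hma : (0:ℝ) < (m:ℝ)+1+a := by linarith
      have hmb : (0:ℝ) < (m:ℝ)+1+b := by linarith
      have h1 : Real.log (1 + 1/((m:ℝ)+1+b)) ≤ Real.log (1 + 1/((m:ℝ)+1+a)) := by
        apply Real.log_le_log (by positivity)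
        have : 1/((m:ℝ)+1+b) ≤ 1/((m:ℝ)+1+a) :=
          one_div_le_one_div_of_le hma (by linarith)
        linarith
      linarith
    have hFlim : Tendsto F atTop (nhds 0) := by
      have h1 : ∀ m : ℕ, F m = 2 * Real.log (1 + (b-a)/((m:ℝ)+1+a)) := by
        intro m
        have hm0 : (0:ℝ) ≤ (m:ℝ) := Nat.cast_nonneg m
        have hma : (0:ℝ) < (m:ℝ)+1+a := by linarith
        have : (1:ℝ) + (b-a)/((m:ℝ)+1+a) = ((m:ℝ)+1+b)/((m:ℝ)+1+a) := by
          field_simp; ring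
        rw [this, Real.log_div (by linarith) hma.ne', hF]
      have h2 : Tendsto (fun m : ℕ => (b-a)/((m:ℝ)+1+a)) atTop (nhds 0) := by
        apply Tendsto.div_atTop tendsto_const_nhds
        exact tendsto_atTop_add_const_right _ _
          (tendsto_atTop_add_const_right _ 1 tendsto_natCast_atTop_atTop)
      have h3 : Tendsto (fun m : ℕ => 2 * Real.log (1 + (b-a)/((m:ℝ)+1+a)))
          atTop (nhds (2 * Real.log (1+0))) := by
        apply Tendsto.const_mul
        exact (Real.continuousAt_log (by norm_num)).tendsto.comp
          (tendsto_const_nhds.add h2)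
      simp only [add_zero, Real.log_one, mul_zero] at h3
      exact h3.congr (fun m => (h1 m).symm)
    have hhs : HasSum (fun m : ℕ => F m - F (m+1)) (F 0) := by
      rw [hasSum_iff_tendsto_nat_of_nonneg hcnn]
      have : ∀ K : ℕ, ∑ m ∈ Finset.range K, (F m - F (m+1)) = F 0 - F K :=
        fun K => Finset.sum_range_sub' F K
      simp only [this]
      simpa using tendsto_const_nhds.sub hFlim
    calc volume (Set.Ioo (0:ℝ) 1 ∩ gaussMap^[n+1] ⁻¹' Set.Icc a b)
        ≤ volume ((Set.Ioo (0:ℝ) 1 ∩ gaussMap^[n] ⁻¹' Set.Icc 0 0) ∪ ⋃ m : ℕ, A m) :=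
          measure_mono hsub
      _ ≤ volume (Set.Ioo (0:ℝ) 1 ∩ gaussMap^[n] ⁻¹' Set.Icc (0:ℝ) 0)
            + volume (⋃ m : ℕ, A m) := measure_union_le _ _
      _ = volume (⋃ m : ℕ, A m) := by rw [hzero, zero_add]
      _ ≤ ∑' m : ℕ, volume (A m) := measure_iUnion_le _
      _ ≤ ∑' m : ℕ, ENNReal.ofReal (F m - F (m+1)) := by
          apply ENNReal.tsum_le_tsum
          intro m
          have hm0 : (0:ℝ) ≤ (m:ℝ) := Nat.cast_nonneg m
          have hma : (0:ℝ) < (m:ℝ)+1+a := by linarith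
          have hmb : (0:ℝ) < (m:ℝ)+1+b := by linarith
          have := ih (1/((m:ℝ)+1+b)) (1/((m:ℝ)+1+a))
            (by positivity)
            (one_div_le_one_div_of_le hma (by linarith))
            (by rw [div_le_one hma]; linarith)
          rw [hc m] at this
          exact this
      _ = ENNReal.ofReal (F 0) := by
          rw [← ENNReal.ofReal_tsum_of_nonneg hcnn hhs.summable, hhs.tsum_eq]
      _ = ENNReal.ofReal (2 * (Real.log (1 + b) - Real.log (1 + a))) := by
          norm_num [hF]

theorem khinchin_convergent (φ : ℕ → ℝ) (hφ : ∀ k, 0 < φ k)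
    (hsum : Summable (fun k : ℕ => 1 / φ k)) :
    ∀ᵐ α ∂(MeasureTheory.volume.restrict (Set.Ioo (0:ℝ) 1)),
      ∀ᶠ k : ℕ in Filter.atTop, (cfA α k : ℝ) ≤ φ k := by
  set μ := MeasureTheory.volume.restrict (Set.Ioo (0:ℝ) 1)
  set s : ℕ → Set ℝ := fun k => {α : ℝ | φ k < (cfA α k : ℝ)} with hs
  have hbound : ∀ k : ℕ, μ (s k) ≤ ENNReal.ofReal (2 * (1 / φ k)) := by
    intro k
    have hres : μ (s k) = volume (s k ∩ Set.Ioo (0:ℝ) 1) :=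
      Measure.restrict_apply' measurableSet_Ioo
    rw [hres]
    have hφk := hφ k
    have hsub : s k ∩ Set.Ioo (0:ℝ) 1 ⊆
        Set.Ioo (0:ℝ) 1 ∩ gaussMap^[k-1] ⁻¹' Set.Icc 0 (min 1 (φ k)⁻¹) := by
      rintro α ⟨hα, hα01⟩
      refine ⟨hα01, ?_⟩
      rw [Set.mem_preimage, Set.mem_Icc]
      set y := gaussMap^[k-1] α with hy
      have hy01 : y ∈ Set.Ico (0:ℝ) 1 := gaussMap_iter_mem hα01 (k-1)
      have hα' : φ k < (⌊y⁻¹⌋₊ : ℝ) := hα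
      have hfl : (⌊y⁻¹⌋₊ : ℝ) ≤ y⁻¹ := by
        apply Nat.floor_le
        exact inv_nonneg.mpr hy01.1
      have hinv : φ k < y⁻¹ := lt_of_lt_of_le hα' hfl
      have hy0 : 0 < y := by
        rcases eq_or_lt_of_le hy01.1 with h | h
        · exfalso; rw [← h] at hinv; simp at hinv; linarith
        · exact h
      refine ⟨hy01.1, le_min hy01.2.le ?_⟩
      rw [← inv_inv y]
      exact (inv_le_inv₀ (inv_pos.mpr hy0) hφk).mpr hinv.le
    calc volume (s k ∩ Set.Ioo (0:ℝ) 1)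
        ≤ volume (Set.Ioo (0:ℝ) 1 ∩ gaussMap^[k-1] ⁻¹' Set.Icc 0 (min 1 (φ k)⁻¹)) :=
          measure_mono hsub
      _ ≤ ENNReal.ofReal (2 * (Real.log (1 + min 1 (φ k)⁻¹) - Real.log (1 + 0))) :=
          gauss_kuzmin_bound (k-1) 0 (min 1 (φ k)⁻¹)
            le_rfl (le_min zero_le_one (inv_nonneg.mpr hφk.le)) (min_le_left _ _)
      _ ≤ ENNReal.ofReal (2 * (1 / φ k)) := by
          apply ENNReal.ofReal_le_ofReal
          have h1 : Real.log (1 + min 1 (φ k)⁻¹) ≤ min 1 (φ k)⁻¹ := by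
            have := Real.log_le_sub_one_of_pos
              (show (0:ℝ) < 1 + min 1 (φ k)⁻¹ by
                have : (0:ℝ) ≤ min 1 (φ k)⁻¹ := le_min zero_le_one (inv_nonneg.mpr hφk.le)
                linarith)
            linarith
          have h2 : min 1 (φ k)⁻¹ ≤ (φ k)⁻¹ := min_le_right _ _
          rw [add_zero, Real.log_one, one_div]
          nlinarith
  have htsum : (∑' k, μ (s k)) ≠ ⊤ := by
    have hsum2 : Summable (fun k : ℕ => 2 * (1 / φ k)) := hsum.mul_left 2
    have : (∑' k, μ (s k)) ≤ ∑' k, ENNReal.ofReal (2 * (1 / φ k)) :=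
      ENNReal.tsum_le_tsum hbound
    rw [← ENNReal.ofReal_tsum_of_nonneg
      (fun k => mul_nonneg (by norm_num) (by rw [one_div]; exact inv_nonneg.mpr (hφ k).le))
      hsum2] at this
    exact ne_top_of_le_ne_top ENNReal.ofReal_ne_top this
  filter_upwards [ae_eventually_notMem htsum] with α hα
  filter_upwards [hα] with k hk
  simpa [hs, not_lt] using hk
end

section
/- Let φ: ℕ → (0,∞). If Σ_k 1/φ(k) = ∞, then for Lebesgue-almost every α ∈ (0,1), a_k(α) > φ(k) for infinitely many k. -/
open Filter MeasureTheory Real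

namespace KhinchinAux

open Set

lemma irr_set_eq : {x : ℝ | Irrational x} = (Set.range ((↑) : ℚ → ℝ))ᶜ := rfl

lemma measurableSet_irr : MeasurableSet {x : ℝ | Irrational x} := by
  rw [irr_set_eq]
  exact ((Set.countable_range _).measurableSet).compl

lemma vol_inter_irr (s : Set ℝ) : volume (s ∩ {x | Irrational x}) = volume s := by
  refine le_antisymm (measure_mono inter_subset_left) ?_
  have h0 : volume (s ∩ (Set.range ((↑) : ℚ → ℝ))) = 0 :=
    measure_mono_null inter_subset_right ((Set.countable_range _).measure_zero _)
  calc volume s = volume ((s ∩ {x | Irrational x}) ∪ (s ∩ (Set.range ((↑) : ℚ → ℝ)))) := by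
        congr 1
        rw [irr_set_eq, ← Set.inter_union_distrib_left]
        simp
    _ ≤ volume (s ∩ {x | Irrational x}) + volume (s ∩ (Set.range ((↑) : ℚ → ℝ))) :=
        measure_union_le _ _
    _ = volume (s ∩ {x | Irrational x}) := by rw [h0, add_zero]

lemma gauss_step {α : ℝ} (h1 : Irrational α) (h2 : α ∈ Set.Ioo (0:ℝ) 1) :
    Irrational (gaussMap α) ∧ gaussMap α ∈ Set.Ioo (0:ℝ) 1 := by
  have hinv : Irrational α⁻¹ := h1.inv
  have hirr : Irrational (gaussMap α) := by
    have h := hinv.sub_intCast ⌊α⁻¹⌋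
    have h2 : gaussMap α = α⁻¹ - (⌊α⁻¹⌋ : ℤ) := rfl
    rwa [← h2] at h
  exact ⟨hirr, ⟨lt_of_le_of_ne (Int.fract_nonneg _) (Ne.symm (by simpa [gaussMap] using hirr.ne_zero)),
    Int.fract_lt_one _⟩⟩

lemma gauss_iter {α : ℝ} (h1 : Irrational α) (h2 : α ∈ Set.Ioo (0:ℝ) 1) (k : ℕ) :
    Irrational (gaussMap^[k] α) ∧ gaussMap^[k] α ∈ Set.Ioo (0:ℝ) 1 := by
  induction k with
  | zero => exact ⟨h1, h2⟩
  | succ n ih =>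
    rw [Function.iterate_succ_apply']
    exact gauss_step ih.1 ih.2

lemma measurable_gaussMap : Measurable gaussMap := measurable_fract.comp measurable_inv

lemma measurable_iter (k : ℕ) : Measurable (gaussMap^[k]) := measurable_gaussMap.iterate k

lemma measurable_cfA (k : ℕ) : Measurable fun α => cfA α k :=
  Nat.measurable_floor.comp (measurable_inv.comp (measurable_iter (k-1)))

/-! ### Möbius machinery -/

structure MData where
  a : ℕ
  b : ℕ
  c : ℕ
  d : ℕ

noncomputable def MData.G (p : MData) (t : ℝ) : ℝ := (p.a + p.b * t) / (p.c + p.d * t)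

def MData.det (p : MData) : ℤ := (p.b : ℤ) * p.c - (p.a : ℤ) * p.d

def mob : List ℕ → MData
  | [] => ⟨0, 1, 1, 0⟩
  | m :: l => ⟨(mob l).c, (mob l).d, m * (mob l).c + (mob l).a, m * (mob l).d + (mob l).b⟩

lemma mob_c_pos : ∀ l : List ℕ, (∀ x ∈ l, 1 ≤ x) → 1 ≤ (mob l).c
  | [], _ => le_refl 1
  | m :: l, hl => by
    have h1 := mob_c_pos l (fun x hx => hl x (List.mem_cons_of_mem _ hx))
    have hm : 1 ≤ m := hl m (List.mem_cons_self)
    simp only [mob]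
    nlinarith [Nat.zero_le (mob l).a]

lemma mob_det : ∀ l : List ℕ, (mob l).det = 1 ∨ (mob l).det = -1
  | [] => by left; simp [mob, MData.det]
  | m :: l => by
    have h := mob_det l
    have : (mob (m :: l)).det = -(mob l).det := by
      simp only [mob, MData.det]
      push_cast
      ring
    rw [this]
    omega

lemma denom_pos (p : MData) (hc : 1 ≤ p.c) {t : ℝ} (ht : 0 ≤ t) : 0 < (p.c : ℝ) + p.d * t := by
  have : (1:ℝ) ≤ (p.c : ℝ) := by exact_mod_cast hc
  have : (0:ℝ) ≤ (p.d : ℝ) * t := by positivity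
  linarith

lemma G_sub (p : MData) (hc : 1 ≤ p.c) {s t : ℝ} (hs : 0 ≤ s) (ht : 0 ≤ t) :
    p.G t - p.G s = (p.det : ℝ) * (t - s) / (((p.c : ℝ) + p.d * s) * ((p.c : ℝ) + p.d * t)) := by
  have h1 := denom_pos p hc hs
  have h2 := denom_pos p hc ht
  simp only [MData.G, MData.det]
  field_simp
  push_cast
  ring

lemma G_irrational (p : MData) (hc : 1 ≤ p.c) (hdet : p.det = 1 ∨ p.det = -1)
    {t : ℝ} (ht : 0 ≤ t) (hirr : Irrational t) : Irrational (p.G t) := by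
  intro ⟨q, hq⟩
  have hden := denom_pos p hc ht
  have heq : (p.a : ℝ) + p.b * t = (q : ℝ) * ((p.c : ℝ) + p.d * t) := by
    have : p.G t = (q:ℝ) := hq.symm
    rw [MData.G] at this
    field_simp at this
    linarith [this]
  by_cases hb : (p.b : ℝ) - (q : ℝ) * p.d = 0
  · -- then also a = q c, so det = 0, contradiction
    have ha : (p.a : ℝ) = (q : ℝ) * p.c := by nlinarith [heq, hb]
    have : ((p.det : ℤ) : ℝ) = 0 := by
      simp only [MData.det]
      push_cast
      nlinarith [ha, hb]
    rcases hdet with h | h <;> rw [h] at this <;> norm_num at this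
  · have : t = ((q : ℝ) * p.c - p.a) / ((p.b : ℝ) - q * p.d) := by
      field_simp
      nlinarith [heq]
    apply hirr
    refine ⟨((q * p.c - p.a) / (p.b - q * p.d) : ℚ), ?_⟩
    rw [this]
    push_cast
    ring
  
lemma G_rat (p : MData) {t : ℝ} (r : ℚ) (ht : t = (r : ℝ)) (hden : (p.c : ℝ) + p.d * t ≠ 0) :
    p.G t = (((p.a + p.b * r) / (p.c + p.d * r) : ℚ) : ℝ) := by
  subst ht
  rw [MData.G]
  push_cast
  ring_nf

lemma G_continuousOn (p : MData) (hc : 1 ≤ p.c) {u v : ℝ} (hu : 0 ≤ u) :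
    ContinuousOn p.G (Set.Icc u v) := by
  apply ContinuousOn.div
  · fun_prop
  · fun_prop
  · intro x hx
    exact (denom_pos p hc (le_trans hu hx.1)).ne'

lemma volume_image_G (p : MData) (hc : 1 ≤ p.c) (hdet : p.det = 1 ∨ p.det = -1)
    {u v : ℝ} (hu : 0 ≤ u) (huv : u < v) :
    volume (p.G '' (Set.Ioo u v ∩ {x | Irrational x})) =
      ENNReal.ofReal ((v - u) / (((p.c : ℝ) + p.d * u) * ((p.c : ℝ) + p.d * v))) := by
  have hv : 0 ≤ v := le_trans hu huv.le
  have hdu := denom_pos p hc hu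
  have hdv := denom_pos p hc hv
  -- strict monotonicity data
  have hmono : ∀ {s t : ℝ}, 0 ≤ s → 0 ≤ t → s < t →
      p.G t - p.G s = (p.det : ℝ) * ((t - s) / (((p.c : ℝ) + p.d * s) * ((p.c : ℝ) + p.d * t))) := by
    intro s t hs ht hst
    rw [G_sub p hc hs ht]; ring
  have hratpos : ∀ {s t : ℝ}, 0 ≤ s → 0 ≤ t → s < t →
      0 < (t - s) / (((p.c : ℝ) + p.d * s) * ((p.c : ℝ) + p.d * t)) := by
    intro s t hs ht hst
    have := denom_pos p hc hs
    have := denom_pos p hc ht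
    have : 0 < t - s := by linarith
    positivity
  -- the target interval
  rcases hdet with hd1 | hd1
  · -- increasing case
    have hdr : ((p.det : ℤ) : ℝ) = 1 := by rw [hd1]; norm_num
    have hlt : ∀ {s t : ℝ}, 0 ≤ s → 0 ≤ t → s < t → p.G s < p.G t := by
      intro s t hs ht hst
      have h1 := hmono hs ht hst
      have h2 := hratpos hs ht hst
      rw [hdr, one_mul] at h1
      linarith
    have himg : p.G '' (Set.Ioo u v ∩ {x | Irrational x}) =
        Set.Ioo (p.G u) (p.G v) ∩ {x | Irrational x} := by
      apply Set.Subset.antisymm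
      · rintro y ⟨t, ⟨⟨ht1, ht2⟩, htirr⟩, rfl⟩
        have ht0 : 0 ≤ t := le_trans hu ht1.le
        exact ⟨⟨hlt hu ht0 ht1, hlt ht0 hv ht2⟩, G_irrational p hc (Or.inl hd1) ht0 htirr⟩
      · rintro y ⟨hy, hyirr⟩
        obtain ⟨t, ht, rfl⟩ := intermediate_value_Ioo huv.le (G_continuousOn p hc hu) hy
        refine ⟨t, ⟨ht, ?_⟩, rfl⟩
        -- t irrational, else G t rational
        intro ⟨r, hr⟩
        exact hyirr ⟨_, (G_rat p r hr.symm (denom_pos p hc (le_trans hu ht.1.le)).ne').symm⟩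
      
    rw [himg, vol_inter_irr, Real.volume_Ioo]
    congr 1
    rw [G_sub p hc hu hv, hdr]
    ring
  · -- decreasing case
    have hdr : ((p.det : ℤ) : ℝ) = -1 := by rw [hd1]; norm_num
    have hlt : ∀ {s t : ℝ}, 0 ≤ s → 0 ≤ t → s < t → p.G t < p.G s := by
      intro s t hs ht hst
      have h1 := hmono hs ht hst
      have h2 := hratpos hs ht hst
      rw [hdr] at h1
      linarith
    have himg : p.G '' (Set.Ioo u v ∩ {x | Irrational x}) =
        Set.Ioo (p.G v) (p.G u) ∩ {x | Irrational x} := by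
      apply Set.Subset.antisymm
      · rintro y ⟨t, ⟨⟨ht1, ht2⟩, htirr⟩, rfl⟩
        have ht0 : 0 ≤ t := le_trans hu ht1.le
        exact ⟨⟨hlt ht0 hv ht2, hlt hu ht0 ht1⟩, G_irrational p hc (Or.inr hd1) ht0 htirr⟩
      · rintro y ⟨hy, hyirr⟩
        obtain ⟨t, ht, rfl⟩ := intermediate_value_Ioo' huv.le (G_continuousOn p hc hu) hy
        refine ⟨t, ⟨ht, ?_⟩, rfl⟩
        intro ⟨r, hr⟩
        exact hyirr ⟨_, (G_rat p r hr.symm (denom_pos p hc (le_trans hu ht.1.le)).ne').symm⟩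
    rw [himg, vol_inter_irr, Real.volume_Ioo]
    congr 1
    rw [G_sub p hc hv hu, hdr]
    ring

/-! ### Cylinder sets -/

def Zset (l : List ℕ) (c₀ : ℝ) : Set ℝ :=
  Set.Ioo (0:ℝ) 1 ∩ {x | Irrational x} ∩ {α | ∀ i < l.length, cfA α (i+1) = l.getD i 0}
    ∩ {α | gaussMap^[l.length] α < c₀}

lemma measurableSet_Zset (l : List ℕ) (c₀ : ℝ) : MeasurableSet (Zset l c₀) := by
  refine ((measurableSet_Ioo.inter measurableSet_irr).inter ?_).inter ?_
  · have h : {α : ℝ | ∀ i < l.length, cfA α (i+1) = l.getD i 0}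
        = ⋂ i ∈ Finset.range l.length, (fun α => cfA α (i+1)) ⁻¹' {l.getD i 0} := by
      ext α; simp
    rw [h]
    exact MeasurableSet.biInter (Set.to_countable _) fun i _ =>
      measurable_cfA _ (measurableSet_singleton _)
  · exact measurableSet_lt (measurable_iter _) measurable_const

lemma cfA_pos {α : ℝ} (h1 : Irrational α) (h2 : α ∈ Set.Ioo (0:ℝ) 1) (k : ℕ) :
    1 ≤ cfA α (k+1) := by
  obtain ⟨hi, hx⟩ := gauss_iter h1 h2 k
  have hk : (k+1) - 1 = k := rfl
  rw [cfA, hk]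
  refine Nat.le_floor ?_
  rw [Nat.cast_one]
  exact (one_lt_inv_iff₀.mpr ⟨hx.1, hx.2⟩).le

lemma Zset_empty (l : List ℕ) (hm : ¬ ∀ x ∈ l, 1 ≤ x) (c₀ : ℝ) : Zset l c₀ = ∅ := by
  push_neg at hm
  obtain ⟨x, hx, hlt⟩ := hm
  obtain ⟨i, hi, hget⟩ := List.getElem_of_mem hx
  ext α
  simp only [Set.mem_empty_iff_false, iff_false]
  rintro ⟨⟨⟨hIoo, hirr⟩, hdig⟩, -⟩
  have h1 := hdig i hi
  rw [List.getD_eq_getElem _ _ hi, hget] at h1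
  have h2 := cfA_pos hirr hIoo i
  omega

lemma cfA_one_floor (α : ℝ) : cfA α 1 = ⌊α⁻¹⌋₊ := rfl

lemma cfA_succ_succ (α : ℝ) (i : ℕ) : cfA α (i+2) = cfA (gaussMap α) (i+1) := by
  have e1 : i + 2 - 1 = i + 1 := rfl
  have e2 : i + 1 - 1 = i := rfl
  simp only [cfA, e1, e2]
  rw [Function.iterate_succ_apply]

lemma inv_eq_digit_add {α : ℝ} (h1 : Irrational α) (h2 : α ∈ Set.Ioo (0:ℝ) 1) :
    α⁻¹ = (cfA α 1 : ℝ) + gaussMap α := by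
  have hα : 0 < α := h2.1
  have hinv1 : 1 < α⁻¹ := one_lt_inv_iff₀.mpr ⟨h2.1, h2.2⟩
  have hnn : (0:ℤ) ≤ ⌊α⁻¹⌋ := Int.floor_nonneg.2 (by linarith)
  have hfloor : ((⌊α⁻¹⌋₊ : ℕ) : ℝ) = ((⌊α⁻¹⌋ : ℤ) : ℝ) := by
    rw [← Int.floor_toNat]
    exact_mod_cast congrArg (Int.cast : ℤ → ℝ) (Int.toNat_of_nonneg hnn)
  rw [cfA_one_floor, hfloor]
  have : gaussMap α = Int.fract α⁻¹ := rfl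
  rw [this, Int.floor_add_fract]

lemma h_m_mem {β : ℝ} (hβi : Irrational β) (hβ : β ∈ Set.Ioo (0:ℝ) 1) (m : ℕ) (hm : 1 ≤ m) :
    Irrational ((m:ℝ) + β)⁻¹ ∧ ((m:ℝ) + β)⁻¹ ∈ Set.Ioo (0:ℝ) 1 ∧
      cfA ((m:ℝ) + β)⁻¹ 1 = m ∧ gaussMap ((m:ℝ) + β)⁻¹ = β := by
  have hm1 : (1:ℝ) ≤ m := by exact_mod_cast hm
  have hmb : 1 < (m:ℝ) + β := by linarith [hβ.1]
  have hpos : 0 < (m:ℝ) + β := by linarith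
  refine ⟨(hβi.natCast_add m).inv, ⟨by positivity, ?_⟩, ?_, ?_⟩
  · exact inv_lt_one_of_one_lt₀ hmb
  · rw [cfA_one_floor, inv_inv]
    rw [Nat.floor_eq_iff (by positivity)]
    constructor
    · linarith [hβ.1]
    · push_cast; linarith [hβ.2]
  · show Int.fract (((m:ℝ) + β)⁻¹)⁻¹ = β
    rw [inv_inv, add_comm, Int.fract_add_natCast, Int.fract_eq_self.2 ⟨hβ.1.le, hβ.2⟩]


lemma G_comp (m : ℕ) (l : List ℕ) (hm : 1 ≤ m) (hc : 1 ≤ (mob l).c) {t : ℝ} (ht : 0 ≤ t) :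
    (mob (m :: l)).G t = ((m : ℝ) + (mob l).G t)⁻¹ := by
  set p := mob l with hp
  have h1 : 0 < (p.c : ℝ) + p.d * t := denom_pos p hc ht
  have hm1 : (1:ℝ) ≤ (m:ℝ) := by exact_mod_cast hm
  have hnum : (0:ℝ) ≤ (p.a : ℝ) + p.b * t := by positivity
  have h2 : 0 < (m:ℝ) * ((p.c : ℝ) + p.d * t) + ((p.a : ℝ) + p.b * t) := by nlinarith
  have e : mob (m :: l) = ⟨p.c, p.d, m * p.c + p.a, m * p.d + p.b⟩ := by rw [hp]; rfl
  rw [e]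
  show (((p.c : ℕ) : ℝ) + ((p.d : ℕ) : ℝ) * t) / (((m * p.c + p.a : ℕ) : ℝ) + ((m * p.d + p.b : ℕ) : ℝ) * t)
      = ((m : ℝ) + p.G t)⁻¹
  rw [MData.G]
  have hsum : (m:ℝ) + ((p.a:ℝ) + p.b * t)/((p.c:ℝ) + p.d * t)
      = ((m:ℝ)*((p.c:ℝ)+p.d*t) + ((p.a:ℝ)+p.b*t))/((p.c:ℝ)+p.d*t) := by
    field_simp
  rw [hsum, inv_div]
  congr 1
  push_cast
  ring

lemma Zset_cons (m : ℕ) (l : List ℕ) (hm : 1 ≤ m) (c₀ : ℝ) :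
    Zset (m :: l) c₀ = (fun β : ℝ => ((m : ℝ) + β)⁻¹) '' Zset l c₀ := by
  ext α
  constructor
  · rintro ⟨⟨⟨hIoo, hirr⟩, hdig⟩, htail⟩
    simp only [Set.mem_setOf_eq] at hdig htail hirr
    obtain ⟨hβirr, hβIoo⟩ := gauss_step hirr hIoo
    have hd0 : cfA α 1 = m := by
      have := hdig 0 (by simp)
      simpa using this
    have hαeq : α = ((m : ℝ) + gaussMap α)⁻¹ := by
      rw [← hd0, ← inv_eq_digit_add hirr hIoo, inv_inv]
    refine ⟨gaussMap α, ⟨⟨⟨hβIoo, hβirr⟩, ?_⟩, ?_⟩, hαeq.symm⟩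
    · intro i hi
      have := hdig (i+1) (by simpa using Nat.succ_lt_succ hi)
      rw [cfA_succ_succ] at this
      simpa using this
    · show gaussMap^[l.length] (gaussMap α) < c₀
      rw [← Function.iterate_succ_apply]
      exact htail
  · rintro ⟨β, ⟨⟨⟨hβIoo, hβirr⟩, hdig⟩, htail⟩, rfl⟩
    simp only [Set.mem_setOf_eq] at hdig htail hβirr
    obtain ⟨hirr, hIoo, hd1, hgauss⟩ := h_m_mem hβirr hβIoo m hm
    refine ⟨⟨⟨hIoo, hirr⟩, ?_⟩, ?_⟩
    · intro i hi
      match i with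
      | 0 => simpa using hd1
      | Nat.succ j =>
        rw [cfA_succ_succ, hgauss]
        have := hdig j (by simpa using hi)
        simpa using this
    · show gaussMap^[l.length + 1] (((m:ℝ) + β)⁻¹) < c₀
      rw [Function.iterate_succ_apply, hgauss]
      exact htail

lemma Zset_eq (l : List ℕ) (hl : ∀ x ∈ l, 1 ≤ x) {c₀ : ℝ} (h0 : 0 < c₀) (h1 : c₀ ≤ 1) :
    Zset l c₀ = (mob l).G '' (Set.Ioo 0 c₀ ∩ {x | Irrational x}) := by
  induction l with
  | nil =>
    have hGid : ∀ t ∈ Set.Ioo (0:ℝ) c₀ ∩ {x | Irrational x}, (mob []).G t = t := by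
      intro t _
      simp [mob, MData.G]
    rw [Set.image_congr hGid, Set.image_id']
    ext α
    constructor
    · rintro ⟨⟨⟨hIoo, hirr⟩, -⟩, htail⟩
      exact ⟨⟨hIoo.1, by simpa using htail⟩, hirr⟩
    · rintro ⟨⟨ha0, hac⟩, hirr⟩
      exact ⟨⟨⟨⟨ha0, lt_of_lt_of_le hac h1⟩, hirr⟩, by simp⟩, by simpa using hac⟩
  | cons m l ih =>
    have hm : 1 ≤ m := hl m (List.mem_cons_self)
    have hl' : ∀ x ∈ l, 1 ≤ x := fun x hx => hl x (List.mem_cons_of_mem _ hx)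
    have hc := mob_c_pos l hl'
    rw [Zset_cons m l hm, ih hl']
    rw [← Set.image_comp]
    apply Set.image_congr
    intro t ht
    exact (G_comp m l hm hc ht.1.1.le).symm

lemma volume_Zset (l : List ℕ) (hl : ∀ x ∈ l, 1 ≤ x) {c₀ : ℝ} (h0 : 0 < c₀) (h1 : c₀ ≤ 1) :
    volume (Zset l c₀)
      = ENNReal.ofReal (c₀ / (((mob l).c : ℝ) * (((mob l).c : ℝ) + (mob l).d * c₀))) := by
  rw [Zset_eq l hl h0 h1, volume_image_G (mob l) (mob_c_pos l hl) (mob_det l) le_rfl h0]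
  congr 1
  ring_nf

lemma volume_Zset_le (l : List ℕ) {c₀ : ℝ} (h0 : 0 < c₀) (h1 : c₀ ≤ 1) :
    ENNReal.ofReal c₀ * volume (Zset l 1) ≤ volume (Zset l c₀) := by
  by_cases hl : ∀ x ∈ l, 1 ≤ x
  · rw [volume_Zset l hl h0 h1, volume_Zset l hl one_pos le_rfl, ← ENNReal.ofReal_mul h0.le]
    apply ENNReal.ofReal_le_ofReal
    set p := mob l
    have hc : (1:ℝ) ≤ (p.c : ℝ) := by exact_mod_cast mob_c_pos l hl
    have hd : (0:ℝ) ≤ (p.d : ℝ) := Nat.cast_nonneg _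
    have h2 : 0 < (p.c:ℝ) + p.d * c₀ := by nlinarith
    have h3 : 0 < (p.c:ℝ) + p.d * 1 := by nlinarith
    rw [mul_one_div]
    apply div_le_div_of_nonneg_left h0.le (by nlinarith)
    nlinarith [mul_nonneg (mul_nonneg (by linarith : (0:ℝ) ≤ (p.c:ℝ)) hd)
      (by linarith : (0:ℝ) ≤ 1 - c₀)]
  · rw [Zset_empty l hl, Zset_empty l hl]
    simp


/-! ### Digit vectors -/

noncomputable def dvec (k : ℕ) (α : ℝ) : Fin k → ℕ := fun i => cfA α (i.1 + 1)

lemma measurable_dvec_top (k : ℕ) :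
    @Measurable ℝ (Fin k → ℕ) _ ⊤ (dvec k) := by
  refine @measurable_to_countable (Fin k → ℕ) ℝ ⊤ _ _ (dvec k) ?_
  intro y
  have h : dvec k ⁻¹' {dvec k y} = ⋂ i : Fin k, (fun α => cfA α (i.1 + 1)) ⁻¹' {dvec k y i} := by
    ext α
    simp [dvec, funext_iff]
  rw [h]
  exact MeasurableSet.iInter fun i => measurable_cfA _ (measurableSet_singleton _)

lemma mem_Zset_ofFn {k : ℕ} (b : Fin k → ℕ) (c₀ : ℝ) (α : ℝ) :
    α ∈ Zset (List.ofFn b) c₀ ↔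
      α ∈ Set.Ioo (0:ℝ) 1 ∧ Irrational α ∧ dvec k α = b ∧ gaussMap^[k] α < c₀ := by
  constructor
  · rintro ⟨⟨⟨hIoo, hirr⟩, hdig⟩, htail⟩
    refine ⟨hIoo, hirr, ?_, ?_⟩
    · funext i
      have := hdig i.1 (by simpa [List.length_ofFn] using i.2)
      rw [List.getD_eq_getElem _ _ (by simpa [List.length_ofFn] using i.2),
        List.getElem_ofFn] at this
      simpa [dvec] using this
    · have : (List.ofFn b).length = k := List.length_ofFn
      rw [this] at htail
      exact htail
  · rintro ⟨hIoo, hirr, hb, htail⟩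
    refine ⟨⟨⟨hIoo, hirr⟩, ?_⟩, ?_⟩
    · intro i hi
      rw [List.length_ofFn] at hi
      rw [List.getD_eq_getElem _ _ (by simpa [List.length_ofFn] using hi), List.getElem_ofFn]
      rw [← hb]
      rfl
    · show gaussMap^[(List.ofFn b).length] α < c₀
      rw [List.length_ofFn]
      exact htail

lemma key_union (k : ℕ) (S' : Set (Fin k → ℕ)) (c₀ : ℝ) :
    (dvec k ⁻¹' S') ∩ (Set.Ioo 0 1 ∩ {x | Irrational x} ∩ {α | gaussMap^[k] α < c₀})
      = ⋃ b ∈ S', Zset (List.ofFn b) c₀ := by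
  ext α
  simp only [Set.mem_inter_iff, Set.mem_iUnion, Set.mem_preimage, Set.mem_setOf_eq,
    mem_Zset_ofFn]
  constructor
  · rintro ⟨hS, ⟨⟨hIoo, hirr⟩, htail⟩⟩
    exact ⟨dvec k α, hS, hIoo, hirr, rfl, htail⟩
  · rintro ⟨b, hbS, hIoo, hirr, hb, htail⟩
    exact ⟨by rw [hb]; exact hbS, ⟨⟨hIoo, hirr⟩, htail⟩⟩

lemma key_estimate (k : ℕ) (S' : Set (Fin k → ℕ)) {c₀ : ℝ} (h0 : 0 < c₀) (h1 : c₀ ≤ 1) :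
    ENNReal.ofReal c₀ *
        volume ((dvec k ⁻¹' S') ∩ (Set.Ioo 0 1 ∩ {x | Irrational x} ∩ {α | gaussMap^[k] α < 1}))
      ≤ volume ((dvec k ⁻¹' S') ∩ (Set.Ioo 0 1 ∩ {x | Irrational x} ∩ {α | gaussMap^[k] α < c₀})) := by
  rw [key_union, key_union]
  have hdisj : ∀ c₁ : ℝ, S'.PairwiseDisjoint (fun b => Zset (List.ofFn b) c₁) := by
    intro c₁ b _ b' _ hbb'
    rw [Function.onFun, Set.disjoint_left]
    intro α hα hα'
    rw [mem_Zset_ofFn] at hα hα'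
    exact hbb' (hα.2.2.1 ▸ hα'.2.2.1)
  rw [measure_biUnion (S'.to_countable) (hdisj 1) (fun b _ => measurableSet_Zset _ _),
    measure_biUnion (S'.to_countable) (hdisj c₀) (fun b _ => measurableSet_Zset _ _)]
  rw [← ENNReal.tsum_mul_left]
  exact ENNReal.tsum_le_tsum fun b => volume_Zset_le _ h0 h1

lemma measure_cond (φk1 : ℝ) (hφ : 0 < φk1) (k : ℕ) (A : Set ℝ)
    (hA : MeasurableSet[MeasurableSpace.comap (dvec k) ⊤] A) :
    ENNReal.ofReal (1 / ((⌊φk1⌋₊ : ℝ) + 1)) * (volume.restrict (Set.Ioo (0:ℝ) 1)) A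
      ≤ (volume.restrict (Set.Ioo (0:ℝ) 1)) ({α | φk1 < (cfA α (k+1) : ℝ)} ∩ A) := by
  obtain ⟨S', -, rfl⟩ := hA
  set N : ℕ := ⌊φk1⌋₊ + 1 with hN
  have hNpos : 0 < (N:ℝ) := by positivity
  set c₀ : ℝ := 1 / (N:ℝ) with hc₀
  have h0 : 0 < c₀ := by positivity
  have h1 : c₀ ≤ 1 := by
    rw [hc₀, div_le_one hNpos]
    exact_mod_cast Nat.one_le_iff_ne_zero.2 (by omega)
  have hAmeas : MeasurableSet (dvec k ⁻¹' S') := measurable_dvec_top k (by trivial)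
  have hEmeas : MeasurableSet {α : ℝ | φk1 < (cfA α (k+1) : ℝ)} := by
    have : {α : ℝ | φk1 < (cfA α (k+1) : ℝ)}
        = (fun α => cfA α (k+1)) ⁻¹' {n : ℕ | φk1 < (n:ℝ)} := rfl
    rw [this]
    exact measurable_cfA _ ((Set.to_countable _).measurableSet)
  rw [Measure.restrict_apply hAmeas, Measure.restrict_apply (hEmeas.inter hAmeas)]
  -- left side rewriting
  have hL : (dvec k ⁻¹' S') ∩ Set.Ioo 0 1 ∩ {x | Irrational x}
      = (dvec k ⁻¹' S') ∩ (Set.Ioo 0 1 ∩ {x | Irrational x} ∩ {α | gaussMap^[k] α < 1}) := by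
    ext α
    simp only [Set.mem_inter_iff, Set.mem_setOf_eq]
    constructor
    · rintro ⟨⟨hS, hIoo⟩, hirr⟩
      exact ⟨hS, ⟨hIoo, hirr⟩, (gauss_iter hirr hIoo k).2.2⟩
    · rintro ⟨hS, ⟨hIoo, hirr⟩, -⟩
      exact ⟨⟨hS, hIoo⟩, hirr⟩
  have hvolA : volume ((dvec k ⁻¹' S') ∩ Set.Ioo 0 1)
      = volume ((dvec k ⁻¹' S') ∩ (Set.Ioo 0 1 ∩ {x | Irrational x} ∩ {α | gaussMap^[k] α < 1})) := by
    rw [← hL]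
    exact (vol_inter_irr _).symm
  -- right side
  have hR : (dvec k ⁻¹' S') ∩ (Set.Ioo 0 1 ∩ {x | Irrational x} ∩ {α | gaussMap^[k] α < c₀})
      ⊆ {α | φk1 < (cfA α (k+1) : ℝ)} ∩ (dvec k ⁻¹' S') ∩ Set.Ioo 0 1 := by
    rintro α ⟨hS, ⟨hIoo, hirr⟩, htail⟩
    refine ⟨⟨?_, hS⟩, hIoo⟩
    obtain ⟨hxirr, hxIoo⟩ := gauss_iter hirr hIoo k
    have hxpos : 0 < gaussMap^[k] α := hxIoo.1
    have hxc : gaussMap^[k] α < 1/(N:ℝ) := htail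
    have h5 : gaussMap^[k] α * N < 1 := (lt_div_iff₀ hNpos).mp hxc
    have hxN : (N:ℝ) < (gaussMap^[k] α)⁻¹ := by
      rw [← one_div]
      refine (lt_div_iff₀ hxpos).mpr ?_
      rw [mul_comm]
      exact h5
    have hfloor : N ≤ ⌊(gaussMap^[k] α)⁻¹⌋₊ := Nat.le_floor hxN.le
    have hcf : cfA α (k+1) = ⌊(gaussMap^[k] α)⁻¹⌋₊ := by
      have e : (k+1) - 1 = k := rfl
      rw [cfA, e]
    show φk1 < (cfA α (k+1) : ℝ)
    rw [hcf]
    have h2 : (N:ℝ) ≤ (⌊(gaussMap^[k] α)⁻¹⌋₊ : ℝ) := by exact_mod_cast hfloor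
    have h3 : φk1 < (N:ℝ) := by
      rw [hN]
      push_cast
      exact Nat.lt_floor_add_one φk1
    linarith
  have hcc : (1 : ℝ) / ((⌊φk1⌋₊ : ℝ) + 1) = c₀ := by rw [hc₀, hN]; push_cast; ring
  rw [hcc]
  calc ENNReal.ofReal c₀ * volume ((dvec k ⁻¹' S') ∩ Set.Ioo 0 1)
      ≤ volume ((dvec k ⁻¹' S') ∩ (Set.Ioo 0 1 ∩ {x | Irrational x} ∩ {α | gaussMap^[k] α < c₀})) := by
        rw [hvolA]; exact key_estimate k S' h0 h1
    _ ≤ volume ({α | φk1 < (cfA α (k+1) : ℝ)} ∩ (dvec k ⁻¹' S') ∩ Set.Ioo 0 1) := measure_mono hR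

/-! ### Conditional expectation lower bound -/

lemma condexp_indicator_ge {Ω : Type*} {m m0 : MeasurableSpace Ω} (hm : m ≤ m0) (μ : Measure Ω)
    [IsFiniteMeasure μ] {E : Set Ω} (hE : MeasurableSet E) {ε : ℝ} (hε : 0 ≤ ε)
    (h : ∀ A, MeasurableSet[m] A → ENNReal.ofReal ε * μ A ≤ μ (E ∩ A)) :
    ∀ᵐ ω ∂μ, ε ≤ (μ[E.indicator (1 : Ω → ℝ) | m]) ω := by
  haveI : SigmaFinite (μ.trim hm) := by
    haveI := isFiniteMeasure_trim (μ := μ) hm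
    infer_instance
  set f := E.indicator (1 : Ω → ℝ) with hf'
  have hf : Integrable f μ := (integrable_const (1:ℝ)).indicator hE
  set g := μ[f|m] with hg'
  have hgmeas : StronglyMeasurable[m] g := stronglyMeasurable_condExp
  have hnull : ∀ n : ℕ, μ {ω | g ω ≤ ε - 1/((n:ℝ)+1)} = 0 := by
    intro n
    set B := {ω | g ω ≤ ε - 1/((n:ℝ)+1)} with hB'
    have hBm : MeasurableSet[m] B := hgmeas.measurable measurableSet_Iic
    have hBm0 : MeasurableSet B := hm _ hBm
    have h1 : ∫ ω in B, g ω ∂μ = ∫ ω in B, f ω ∂μ := setIntegral_condExp hm hf hBm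
    have h2 : ∫ ω in B, f ω ∂μ = (μ (E ∩ B)).toReal := by
      rw [hf', integral_indicator hE]
      simp [Measure.restrict_restrict hE, Measure.real]
    have h3 : ∫ ω in B, g ω ∂μ ≤ (ε - 1/((n:ℝ)+1)) * (μ B).toReal := by
      calc ∫ ω in B, g ω ∂μ ≤ ∫ _ω in B, (ε - 1/((n:ℝ)+1)) ∂μ := by
            apply setIntegral_mono_on integrable_condExp.integrableOn
              (integrableOn_const (measure_ne_top μ B)) hBm0
            intro ω hω
            exact hω
        _ = (ε - 1/((n:ℝ)+1)) * (μ B).toReal := by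
            rw [setIntegral_const, smul_eq_mul, mul_comm]; rfl
    have h4 : ε * (μ B).toReal ≤ (μ (E ∩ B)).toReal := by
      have hle := h B hBm
      have hfin : μ (E ∩ B) ≠ ⊤ := measure_ne_top μ _
      have := ENNReal.toReal_mono hfin hle
      rwa [ENNReal.toReal_mul, ENNReal.toReal_ofReal hε] at this
    have hδ : 0 < 1/((n:ℝ)+1) := by positivity
    have hBnn : 0 ≤ (μ B).toReal := ENNReal.toReal_nonneg
    have hzero : (μ B).toReal = 0 := by nlinarith
    exact ((ENNReal.toReal_eq_zero_iff _).1 hzero).resolve_right (measure_ne_top μ _)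
  have hlt : μ {ω | g ω < ε} = 0 := by
    have hsub : {ω | g ω < ε} ⊆ ⋃ n : ℕ, {ω | g ω ≤ ε - 1/((n:ℝ)+1)} := by
      intro ω hω
      obtain ⟨n, hn⟩ := exists_nat_one_div_lt (show 0 < ε - g ω by
        simp only [Set.mem_setOf_eq] at hω; linarith)
      exact Set.mem_iUnion.2 ⟨n, by simp only [Set.mem_setOf_eq]; linarith⟩
    exact measure_mono_null hsub (measure_iUnion_null hnull)
  rw [ae_iff]
  convert hlt using 2
  ext ω
  simp [not_le]

/-! ### The filtration -/

noncomputable def filtGauss : Filtration ℕ (by infer_instance : MeasurableSpace ℝ) where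
  seq n := MeasurableSpace.comap (dvec n) ⊤
  mono' := by
    intro n m hnm s hs
    obtain ⟨S', -, rfl⟩ := hs
    exact ⟨(fun v : Fin m → ℕ => (fun i : Fin n => v ⟨i.1, lt_of_lt_of_le i.2 hnm⟩)) ⁻¹' S',
      trivial, rfl⟩
  le' := by
    intro n s hs
    obtain ⟨S', -, rfl⟩ := hs
    exact measurable_dvec_top n (by trivial)

noncomputable def sSeq (φ : ℕ → ℝ) (n : ℕ) : Set ℝ :=
  if n = 0 then ∅ else {α | φ n < (cfA α n : ℝ)}

lemma sSeq_meas (φ : ℕ → ℝ) (n : ℕ) : MeasurableSet[filtGauss n] (sSeq φ n) := by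
  cases n with
  | zero => simp only [sSeq, if_pos rfl]; exact @MeasurableSet.empty _ (filtGauss 0)
  | succ j =>
    rw [sSeq, if_neg (by omega)]
    refine ⟨{v : Fin (j+1) → ℕ | φ (j+1) < (v ⟨j, Nat.lt_succ_self j⟩ : ℝ)}, trivial, ?_⟩
    rfl


/-! ### Divergence of the series -/

lemma eps_not_summable (φ : ℕ → ℝ) (hφ : ∀ k, 0 < φ k)
    (hsum : ¬ Summable (fun k : ℕ => 1 / φ k)) :
    ¬ Summable (fun k => 1 / ((⌊φ (k+1)⌋₊ : ℝ) + 1)) := by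
  intro hsumε
  apply hsum
  have h1 : Summable (fun k => 1 / (φ (k+1) + 1)) := by
    refine Summable.of_nonneg_of_le (fun k => by have := hφ (k+1); positivity) (fun k => ?_) hsumε
    apply one_div_le_one_div_of_le (by have := hφ (k+1); positivity)
    have := Nat.floor_le (hφ (k+1)).le
    linarith
  have h2 : Tendsto (fun k => 1 / (φ (k+1) + 1)) atTop (nhds 0) := h1.tendsto_atTop_zero
  have h3 : ∀ᶠ k in atTop, 1 ≤ φ (k+1) := by
    have hev : ∀ᶠ k in atTop, 1 / (φ (k+1) + 1) < 1/2 :=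
      h2.eventually (gt_mem_nhds (by norm_num : (0:ℝ) < 1/2))
    filter_upwards [hev] with k hk
    by_contra hcon
    push_neg at hcon
    have hp := hφ (k+1)
    have : (1:ℝ)/2 < 1 / (φ (k+1) + 1) := by
      apply one_div_lt_one_div_of_lt (by linarith)
      linarith
    linarith
  obtain ⟨K, hK⟩ := eventually_atTop.1 h3
  rw [← summable_nat_add_iff (K+1)]
  have hshift : Summable (fun n => 1 / (φ (n + K + 1) + 1)) := (summable_nat_add_iff K).2 h1
  refine Summable.of_nonneg_of_le (fun n => by have := hφ (n + (K+1)); positivity)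
    (fun n => ?_) (hshift.mul_left 2)
  have he : n + (K+1) = n + K + 1 := by ring
  rw [he, mul_one_div]
  have h1φ : 1 ≤ φ (n+K+1) := hK (n+K) (Nat.le_add_left K n)
  have hp : 0 < φ (n+K+1) := hφ _
  rw [div_le_div_iff₀ hp (by linarith)]
  linarith

end KhinchinAux

open KhinchinAux in
theorem khinchin_divergent (φ : ℕ → ℝ) (hφ : ∀ k, 0 < φ k)
    (hsum : ¬ Summable (fun k : ℕ => 1 / φ k)) :
    ∀ᵐ α ∂(MeasureTheory.volume.restrict (Set.Ioo (0:ℝ) 1)),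
      ∃ᶠ k : ℕ in Filter.atTop, φ k < (cfA α k : ℝ) := by
  classical
  set μ := MeasureTheory.volume.restrict (Set.Ioo (0:ℝ) 1) with hμ
  haveI : IsFiniteMeasure μ := by
    constructor
    rw [hμ, Measure.restrict_apply_univ, Real.volume_Ioo]
    exact ENNReal.ofReal_lt_top
  set ε : ℕ → ℝ := fun k => 1 / ((⌊φ (k+1)⌋₊ : ℝ) + 1) with hε'
  have hεpos : ∀ k, 0 < ε k := fun k => by positivity
  have hsmeas := sSeq_meas φ
  have hcond : ∀ k, ∀ᵐ α ∂μ, ε k ≤ (μ[(sSeq φ (k+1)).indicator (1 : ℝ → ℝ) | filtGauss k]) α := by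
    intro k
    have hEset : sSeq φ (k+1) = {α | φ (k+1) < (cfA α (k+1) : ℝ)} := by
      rw [sSeq, if_neg (by omega)]
    have hEmeas : MeasurableSet (sSeq φ (k+1)) := by
      rw [hEset]
      have h : {α : ℝ | φ (k+1) < (cfA α (k+1) : ℝ)}
          = (fun α => cfA α (k+1)) ⁻¹' {n : ℕ | φ (k+1) < (n:ℝ)} := rfl
      rw [h]
      exact measurable_cfA _ ((Set.to_countable _).measurableSet)
    refine condexp_indicator_ge (filtGauss.le k) μ hEmeas (hεpos k).le ?_
    intro A hA
    rw [hEset]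
    exact measure_cond (φ (k+1)) (hφ _) k A hA
  have hdiv : ¬ Summable ε := eps_not_summable φ hφ hsum
  have htends : Tendsto (fun n => ∑ k ∈ Finset.range n, ε k) atTop atTop :=
    (not_summable_iff_tendsto_nat_atTop_of_nonneg (fun k => (hεpos k).le)).1 hdiv
  have hae := ae_mem_limsup_atTop_iff (ℱ := filtGauss) μ hsmeas
  have hall : ∀ᵐ α ∂μ, ∀ k, ε k ≤ (μ[(sSeq φ (k+1)).indicator (1 : ℝ → ℝ) | filtGauss k]) α :=
    (ae_all_iff).2 hcond
  filter_upwards [hae, hall] with α h1 h2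
  have hT : Tendsto (fun n => ∑ k ∈ Finset.range n,
      (μ[(sSeq φ (k+1)).indicator (1:ℝ→ℝ)|filtGauss k]) α) atTop atTop :=
    tendsto_atTop_mono (fun n => Finset.sum_le_sum fun k _ => h2 k) htends
  have hmem : α ∈ limsup (sSeq φ) atTop := h1.2 hT
  have hfreq : ∃ᶠ n in atTop, α ∈ sSeq φ n := Filter.mem_limsup_iff_frequently_mem.1 hmem
  refine hfreq.mono ?_
  intro n hn
  by_cases h : n = 0
  · rw [sSeq, if_pos h] at hn; exact absurd hn (Set.notMem_empty α)
  · rw [sSeq, if_neg h] at hn; exact hn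
end
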